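/- arXiv:1703.07276 — 8 statements merged into one kernel-verified Lean document; each statement's English description precedes it below -/
import Mathlib

section
/- For 0 < r < 1 and μ > 0, the gamma density g(x; r, μ) = μ^r x^{r-1} e^{-μx}/Γ(r) admits the mixed exponential representation g(x; r, μ) = ∫_0^∞ z e^{-zx} p(z; r, μ) dz for all x > 0, where p(z; r, μ) = μ^r / (Γ(1-r) Γ(r)) · 1{z ≥ μ} / ((z - μ)^r z). -/
open MeasureTheory Real Set

/-- Gleser's theorem: for `0 < r < 1`, the gamma density with shape `r` and rate `μ`
is a mixed exponential density with mixing density `p(z; r, μ)`. -/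
theorem gamma_density_mixed_exponential (r μ : ℝ) (hr0 : 0 < r) (hr1 : r < 1) (hμ : 0 < μ)
    (x : ℝ) (hx : 0 < x) :
    μ ^ r * x ^ (r - 1) * Real.exp (-(μ * x)) / Real.Gamma r =
      ∫ z in Set.Ioi (0 : ℝ),
        z * Real.exp (-(z * x)) *
          (μ ^ r / (Real.Gamma (1 - r) * Real.Gamma r) *
            (if μ ≤ z then 1 / ((z - μ) ^ r * z) else 0)) := by
  set C : ℝ := μ ^ r / (Real.Gamma (1 - r) * Real.Gamma r) with hC
  set G : ℝ → ℝ := fun z => C * Real.exp (-(z * x)) * (z - μ) ^ (-r) with hG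
  have h1 : (∫ z in Set.Ioi (0 : ℝ),
        z * Real.exp (-(z * x)) *
          (C * (if μ ≤ z then 1 / ((z - μ) ^ r * z) else 0)))
      = ∫ z in Set.Ioi (0 : ℝ), (Set.Ioi μ).indicator G z := by
    refine setIntegral_congr_fun measurableSet_Ioi (fun z hz => ?_)
    simp only [Set.mem_Ioi] at hz
    rcases lt_trichotomy z μ with h | h | h
    · rw [if_neg (not_le.mpr h), Set.indicator_of_notMem (by simpa using h.not_gt)]
      ring
    · subst h
      rw [if_pos le_rfl, Set.indicator_of_notMem (by simp)]
      simp [Real.zero_rpow hr0.ne']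
    · rw [if_pos h.le, Set.indicator_of_mem (Set.mem_Ioi.mpr h)]
      simp only [hG]
      rw [Real.rpow_neg (by linarith : (0:ℝ) ≤ z - μ)]
      have hpow : (z - μ) ^ r ≠ 0 := (Real.rpow_pos_of_pos (by linarith) r).ne'
      field_simp [hz.ne', hpow]
  rw [h1, setIntegral_indicator measurableSet_Ioi,
    show Set.Ioi (0:ℝ) ∩ Set.Ioi μ = Set.Ioi μ by
      rw [Set.inter_eq_right]; exact Set.Ioi_subset_Ioi hμ.le]
  have h2 : (∫ z in Set.Ioi μ, G z) = ∫ t in Set.Ioi (0:ℝ), G (t + μ) := by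
    rw [← integral_indicator measurableSet_Ioi, ← integral_indicator measurableSet_Ioi,
      ← integral_add_right_eq_self ((Set.Ioi μ).indicator G) μ]
    congr 1
    ext t
    by_cases h : 0 < t
    · rw [Set.indicator_of_mem (by simpa using h), Set.indicator_of_mem (Set.mem_Ioi.mpr h)]
    · rw [Set.indicator_of_notMem (by simpa using h),
        Set.indicator_of_notMem (fun hc => h (Set.mem_Ioi.mp hc))]
  rw [h2]
  have h3 : ∀ t ∈ Set.Ioi (0:ℝ), G (t + μ) =
      (C * Real.exp (-(μ * x))) * (t ^ ((1 - r) - 1) * Real.exp (-(x * t))) := by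
    intro t ht
    simp only [hG, add_sub_cancel_right]
    rw [show -((t + μ) * x) = -(x * t) + -(μ * x) by ring, Real.exp_add,
      show (1 - r) - 1 = -r by ring]
    ring
  rw [setIntegral_congr_fun measurableSet_Ioi h3, integral_const_mul,
    integral_rpow_mul_exp_neg_mul_Ioi (by linarith) hx]
  have hΓ1 : Real.Gamma (1 - r) ≠ 0 := (Real.Gamma_pos_of_pos (by linarith)).ne'
  have hΓ2 : Real.Gamma r ≠ 0 := (Real.Gamma_pos_of_pos hr0).ne'
  have hxp : (1 / x) ^ (1 - r) = x ^ (r - 1) := by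
    rw [one_div, ← Real.rpow_neg_one x, ← Real.rpow_mul hx.le, neg_one_mul, neg_sub]
  rw [hxp, hC]
  field_simp
end

section
/- The function p(z; r, μ) = μ^r / (Γ(1-r) Γ(r)) · 1{z ≥ μ} / ((z - μ)^r z), for 0 < r < 1 and μ > 0, is a probability density on (0, ∞): it is nonnegative and integrates to 1. -/
open MeasureTheory Real Set

lemma real_beta (a b : ℝ) (ha : 0 < a) (hb : 0 < b) :
    ∫ x in (0:ℝ)..1, x ^ (a - 1) * (1 - x) ^ (b - 1) =
      Real.Gamma a * Real.Gamma b / Real.Gamma (a + b) := by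
  have h := Complex.Gamma_mul_Gamma_eq_betaIntegral (s := (a : ℂ)) (t := (b : ℂ))
    (by simpa using ha) (by simpa using hb)
  have hB : Complex.betaIntegral (a : ℂ) (b : ℂ) =
      ((∫ x in (0:ℝ)..1, x ^ (a - 1) * (1 - x) ^ (b - 1) : ℝ) : ℂ) := by
    rw [Complex.betaIntegral, ← intervalIntegral.integral_ofReal]
    apply intervalIntegral.integral_congr
    intro x hx
    rw [Set.uIcc_of_le (by norm_num : (0:ℝ) ≤ 1)] at hx
    have hx0 : (0:ℝ) ≤ x := hx.1
    have hx1 : (0:ℝ) ≤ 1 - x := by linarith [hx.2]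
    beta_reduce
    have e1 : ((a:ℂ) - 1) = ((a - 1 : ℝ) : ℂ) := by push_cast; ring
    have e2 : ((b:ℂ) - 1) = ((b - 1 : ℝ) : ℂ) := by push_cast; ring
    have e3 : (1 - (x:ℂ)) = ((1 - x : ℝ) : ℂ) := by push_cast; ring
    rw [e1, e2, e3, ← Complex.ofReal_cpow hx0, ← Complex.ofReal_cpow hx1,
      ← Complex.ofReal_mul]
  have hne : (Complex.Gamma ((a : ℂ) + b)) ≠ 0 := by
    rw [(by push_cast; ring : ((a : ℂ) + b) = ((a + b : ℝ) : ℂ)), Complex.Gamma_ofReal]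
    exact_mod_cast (Real.Gamma_pos_of_pos (by linarith)).ne'
  rw [hB, (by push_cast; ring : ((a : ℂ) + b) = ((a + b : ℝ) : ℂ)), Complex.Gamma_ofReal,
    Complex.Gamma_ofReal, Complex.Gamma_ofReal, ← Complex.ofReal_mul, ← Complex.ofReal_mul] at h
  have h' : Real.Gamma a * Real.Gamma b =
      Real.Gamma (a + b) * ∫ x in (0:ℝ)..1, x ^ (a - 1) * (1 - x) ^ (b - 1) := by
    exact_mod_cast h
  have hGab : Real.Gamma (a + b) ≠ 0 := (Real.Gamma_pos_of_pos (by linarith)).ne'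
  rw [eq_div_iff hGab, h', mul_comm]

/-- The Gleser mixing function `p(z; r, μ)` is a probability density on `(0, ∞)`:
it is nonnegative and integrates to one. -/
theorem gleser_mixing_is_density (r μ : ℝ) (hr0 : 0 < r) (hr1 : r < 1) (hμ : 0 < μ) :
    (∀ z : ℝ,
        0 ≤ μ ^ r / (Real.Gamma (1 - r) * Real.Gamma r) *
          (if μ ≤ z then 1 / ((z - μ) ^ r * z) else 0)) ∧
      ∫ z in Set.Ioi (0 : ℝ),
          μ ^ r / (Real.Gamma (1 - r) * Real.Gamma r) *
            (if μ ≤ z then 1 / ((z - μ) ^ r * z) else 0) = 1 := by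
  have hG1 : 0 < Real.Gamma (1 - r) := Real.Gamma_pos_of_pos (by linarith)
  have hG2 : 0 < Real.Gamma r := Real.Gamma_pos_of_pos hr0
  constructor
  · intro z
    apply mul_nonneg
    · positivity
    · split_ifs with h
      · have : 0 < z := lt_of_lt_of_le hμ h
        have : 0 ≤ (z - μ) ^ r := Real.rpow_nonneg (by linarith) r
        positivity
      · exact le_refl 0
  · rw [MeasureTheory.integral_const_mul]
    have hstep1 : (∫ z in Set.Ioi (0:ℝ), (if μ ≤ z then 1 / ((z - μ) ^ r * z) else 0))
        = ∫ z in Set.Ioi μ, 1 / ((z - μ) ^ r * z) := by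
      have : ∀ z : ℝ, (if μ ≤ z then 1 / ((z - μ) ^ r * z) else 0)
          = Set.indicator (Set.Ici μ) (fun z => 1 / ((z - μ) ^ r * z)) z := by
        intro z
        simp [Set.indicator_apply]
      simp_rw [this]
      rw [MeasureTheory.setIntegral_indicator measurableSet_Ici,
        (by rw [Set.inter_eq_right]; exact fun x hx => lt_of_lt_of_le hμ hx :
          Set.Ioi (0:ℝ) ∩ Set.Ici μ = Set.Ici μ),
        MeasureTheory.integral_Ici_eq_integral_Ioi]
    have himg : Set.Ioi μ = (fun u : ℝ => μ / (1 - u)) '' Set.Ioo 0 1 := by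
      ext z
      constructor
      · intro hz
        have hz' : μ < z := hz
        have hz0 : 0 < z := hμ.trans hz'
        refine ⟨1 - μ / z, ⟨?_, ?_⟩, ?_⟩
        · have : μ / z < 1 := (div_lt_one hz0).mpr hz'
          linarith
        · have : 0 < μ / z := div_pos hμ hz0
          linarith
        · field_simp
          rw [sub_sub_cancel, div_self hμ.ne']
      · rintro ⟨u, ⟨hu0, hu1⟩, rfl⟩
        have h1u : 0 < 1 - u := by linarith
        have : 1 < 1 / (1 - u) := by
          rw [lt_div_iff₀ h1u]; linarith
        have : μ * 1 < μ * (1 / (1 - u)) := by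
          exact (mul_lt_mul_iff_right₀ hμ).mpr this
        simpa [mul_one, mul_one_div, div_eq_mul_inv] using this
    have hderiv : ∀ u ∈ Set.Ioo (0:ℝ) 1,
        HasDerivWithinAt (fun u : ℝ => μ / (1 - u)) (μ / (1 - u) ^ 2) (Set.Ioo 0 1) u := by
      intro u hu
      have h1u : (1 : ℝ) - u ≠ 0 := by
        have := hu.2; intro h; linarith [sub_eq_zero.mp h]
      have h1 : HasDerivAt (fun u : ℝ => 1 - u) (-1) u := by
        simpa using (hasDerivAt_id u).const_sub 1
      have h2 : HasDerivAt (fun u : ℝ => μ / (1 - u)) (μ / (1 - u) ^ 2) u := by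
        simpa [div_eq_mul_inv, neg_neg, mul_one_div] using (h1.inv h1u).const_mul μ
      exact h2.hasDerivWithinAt
    have hinj : Set.InjOn (fun u : ℝ => μ / (1 - u)) (Set.Ioo 0 1) := by
      intro u hu v hv h
      have hu' : (1:ℝ) - u ≠ 0 := by have := hu.2; intro hh; linarith [sub_eq_zero.mp hh]
      have hv' : (1:ℝ) - v ≠ 0 := by have := hv.2; intro hh; linarith [sub_eq_zero.mp hh]
      field_simp at h
      linarith
    have hstep2 : ∫ z in Set.Ioi μ, 1 / ((z - μ) ^ r * z)
        = ∫ u in Set.Ioo (0:ℝ) 1,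
            |μ / (1 - u) ^ 2| • (1 / ((μ / (1 - u) - μ) ^ r * (μ / (1 - u)))) := by
      rw [himg]
      exact MeasureTheory.integral_image_eq_integral_abs_deriv_smul measurableSet_Ioo hderiv hinj _
    have hstep3 : ∫ u in Set.Ioo (0:ℝ) 1,
            |μ / (1 - u) ^ 2| • (1 / ((μ / (1 - u) - μ) ^ r * (μ / (1 - u))))
        = ∫ u in Set.Ioo (0:ℝ) 1, μ ^ (-r) * (u ^ (1 - r - 1) * (1 - u) ^ (r - 1)) := by
      apply MeasureTheory.setIntegral_congr_fun measurableSet_Ioo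
      intro u hu
      have hu0 : 0 < u := hu.1
      have h1u : 0 < 1 - u := by linarith [hu.2]
      have key : μ / (1 - u) - μ = μ * u / (1 - u) := by field_simp; ring
      beta_reduce
      rw [smul_eq_mul, abs_of_pos (by positivity), key,
        Real.div_rpow (by positivity) h1u.le, Real.mul_rpow hμ.le hu0.le]
      have hμr : (0:ℝ) < μ ^ r := Real.rpow_pos_of_pos hμ r
      have hur : (0:ℝ) < u ^ r := Real.rpow_pos_of_pos hu0 r
      have h1ur : (0:ℝ) < (1 - u) ^ r := Real.rpow_pos_of_pos h1u r
      rw [Real.rpow_neg hμ.le, show (1 - r - 1) = -r by ring, Real.rpow_neg hu0.le,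
        Real.rpow_sub h1u, Real.rpow_one]
      field_simp
    have hbeta : ∫ u in Set.Ioo (0:ℝ) 1, μ ^ (-r) * (u ^ (1 - r - 1) * (1 - u) ^ (r - 1))
        = μ ^ (-r) * (Real.Gamma (1 - r) * Real.Gamma r) := by
      rw [MeasureTheory.integral_const_mul, ← MeasureTheory.integral_Ioc_eq_integral_Ioo,
        ← intervalIntegral.integral_of_le (by norm_num : (0:ℝ) ≤ 1),
        real_beta (1 - r) r (by linarith) hr0]
      norm_num [Real.Gamma_one]
    rw [hstep1, hstep2, hstep3, hbeta]
    have hμr : (0:ℝ) < μ ^ r := Real.rpow_pos_of_pos hμ r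
    rw [Real.rpow_neg hμ.le]
    field_simp
end

section
/- A gamma distribution with shape parameter r > 1 cannot be represented as a mixed exponential distribution; that is, there is no probability measure ν on (0,∞) such that g(x; r, μ) = ∫_0^∞ z e^{-zx} dν(z) for all x > 0. -/
open MeasureTheory Real Set

/-- A gamma distribution with shape parameter `r > 1` cannot be represented as a
mixed exponential distribution. -/
theorem gamma_shape_gt_one_not_mixed_exponential (r μ : ℝ) (hr : 1 < r) (hμ : 0 < μ) :
    ¬ ∃ ν : Measure ℝ, IsProbabilityMeasure ν ∧ ν (Set.Ioi (0 : ℝ))ᶜ = 0 ∧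
      ∀ x : ℝ, 0 < x →
        μ ^ r * x ^ (r - 1) * Real.exp (-(μ * x)) / Real.Gamma r =
          ∫ z, z * Real.exp (-(z * x)) ∂ν := by
  rintro ⟨ν, hprob, hν0, h⟩
  -- ν is concentrated on (0, ∞)
  have hIoi : ν (Set.Ioi (0:ℝ)) = 1 := by
    have h1 := measure_add_measure_compl (μ := ν) (measurableSet_Ioi (a := (0:ℝ)))
    rw [hν0, add_zero, measure_univ] at h1
    exact h1
  -- find a compact chunk of positive mass
  obtain ⟨n, hn⟩ : ∃ n : ℕ, 0 < ν (Set.Ioc ((n+1:ℝ)⁻¹) (n+1)) := by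
    by_contra hc
    push_neg at hc
    have hsub : Set.Ioi (0:ℝ) ⊆ ⋃ n : ℕ, Set.Ioc ((n+1:ℝ)⁻¹) (n+1) := by
      intro z hz
      have hz0 : (0:ℝ) < z := hz
      obtain ⟨n, hn⟩ := exists_nat_gt (max z z⁻¹)
      refine Set.mem_iUnion.2 ⟨n, ?_, ?_⟩
      · have hinv : z⁻¹ < (n:ℝ) + 1 := lt_of_le_of_lt (le_max_right _ _) (by linarith)
        exact (inv_lt_comm₀ (by positivity) hz0).2 hinv
      · have : z < (n:ℝ) + 1 := lt_of_le_of_lt (le_max_left _ _) (by linarith)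
        linarith
    have hz : ν (Set.Ioi (0:ℝ)) = 0 :=
      measure_mono_null hsub
        (measure_iUnion_null fun n => le_antisymm (hc n) bot_le)
    rw [hIoi] at hz
    exact one_ne_zero hz
  set a : ℝ := ((n:ℝ)+1)⁻¹ with ha
  set b : ℝ := ((n:ℝ)+1) with hb
  have ha0 : 0 < a := by positivity
  have hb0 : 0 < b := by positivity
  set S : Set ℝ := Set.Ioc a b with hS
  have hνS : 0 < (ν S).toReal := by
    refine ENNReal.toReal_pos (ne_of_gt hn) ?_
    exact ne_of_lt (lt_of_le_of_lt (measure_mono (Set.subset_univ _)) (by simp))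
  set δ : ℝ := a * Real.exp (-b) * (ν S).toReal with hδ
  have hδ0 : 0 < δ := by positivity
  -- key lower bound for the mixed exponential integral, for 0 < x < 1
  have key : ∀ x : ℝ, 0 < x → x < 1 → δ ≤ ∫ z, z * Real.exp (-(z * x)) ∂ν := by
    intro x hx0 hx1
    have hx := h x hx0
    have hΓ : 0 < Real.Gamma r := Real.Gamma_pos_of_pos (by linarith)
    have hLHS : 0 < μ ^ r * x ^ (r - 1) * Real.exp (-(μ * x)) / Real.Gamma r := by
      have h1 : 0 < μ ^ r := Real.rpow_pos_of_pos hμ r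
      have h2 : 0 < x ^ (r - 1) := Real.rpow_pos_of_pos hx0 (r - 1)
      positivity
    -- integrability
    have hInt : Integrable (fun z => z * Real.exp (-(z * x))) ν := by
      by_contra hni
      rw [integral_undef hni] at hx
      rw [hx] at hLHS
      exact lt_irrefl 0 hLHS
    -- a.e. nonnegativity
    have hae : 0 ≤ᵐ[ν] fun z => z * Real.exp (-(z * x)) := by
      refine (ae_iff.2 (measure_mono_null ?_ hν0))
      intro z hz
      simp only [Set.mem_setOf_eq, Pi.zero_apply] at hz
      simp only [Set.mem_compl_iff, Set.mem_Ioi, not_lt]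
      by_contra hzc
      push_neg at hzc
      exact hz (mul_nonneg (le_of_lt hzc) (le_of_lt (Real.exp_pos _)))
    have hset : ∫ z in S, (fun z => z * Real.exp (-(z * x))) z ∂ν ≤
        ∫ z, z * Real.exp (-(z * x)) ∂ν :=
      setIntegral_le_integral hInt hae
    have hlow : δ ≤ ∫ z in S, z * Real.exp (-(z * x)) ∂ν := by
      have hconst : ∫ _z in S, (a * Real.exp (-b)) ∂ν = (ν S).toReal * (a * Real.exp (-b)) := by
        rw [setIntegral_const, smul_eq_mul, mul_comm, measureReal_def, mul_comm]
      have hmono : ∫ _z in S, (a * Real.exp (-b)) ∂ν ≤ ∫ z in S, z * Real.exp (-(z * x)) ∂ν := by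
        refine setIntegral_mono_on (integrableOn_const ?_) hInt.integrableOn
          measurableSet_Ioc ?_
        · apply ne_of_lt
          exact lt_of_le_of_lt (measure_mono (Set.subset_univ _)) (by simp)
        · intro z hz
          obtain ⟨hz1, hz2⟩ := hz
          have hz0 : 0 < z := lt_trans ha0 hz1
          have hexp : Real.exp (-b) ≤ Real.exp (-(z * x)) := by
            apply Real.exp_le_exp.2
            have : z * x ≤ b := le_trans (mul_le_of_le_one_right (le_of_lt (lt_trans ha0 hz1)) (le_of_lt hx1)) hz2
            linarith
          calc a * Real.exp (-b) ≤ z * Real.exp (-b) := by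
                apply mul_le_mul_of_nonneg_right (le_of_lt hz1) (le_of_lt (Real.exp_pos _))
            _ ≤ z * Real.exp (-(z * x)) := by
                exact mul_le_mul_of_nonneg_left hexp (le_of_lt hz0)
      calc δ = (ν S).toReal * (a * Real.exp (-b)) := by rw [hδ]; ring
        _ = ∫ _z in S, (a * Real.exp (-b)) ∂ν := hconst.symm
        _ ≤ ∫ z in S, z * Real.exp (-(z * x)) ∂ν := hmono
    exact le_trans hlow hset
  -- the gamma density tends to 0 as x → 0⁺
  have hcont : ContinuousAt (fun x : ℝ =>
      μ ^ r * x ^ (r - 1) * Real.exp (-(μ * x)) / Real.Gamma r) 0 := by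
    have h1 : ContinuousAt (fun x : ℝ => x ^ (r - 1)) 0 :=
      Real.continuousAt_rpow_const 0 (r - 1) (Or.inr (by linarith))
    have h2 : ContinuousAt (fun x : ℝ => Real.exp (-(μ * x))) 0 := by
      fun_prop
    exact ((continuousAt_const.mul h1).mul h2).div_const _
  have hval : μ ^ r * (0:ℝ) ^ (r - 1) * Real.exp (-(μ * 0)) / Real.Gamma r = 0 := by
    rw [Real.zero_rpow (sub_ne_zero_of_ne (ne_of_gt hr))]
    ring
  have htend : Filter.Tendsto (fun x : ℝ =>
      μ ^ r * x ^ (r - 1) * Real.exp (-(μ * x)) / Real.Gamma r)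
      (nhdsWithin 0 (Set.Ioi 0)) (nhds 0) := by
    have := hcont.tendsto
    rw [hval] at this
    exact this.mono_left nhdsWithin_le_nhds
  have hev1 : ∀ᶠ x in nhdsWithin (0:ℝ) (Set.Ioi 0),
      μ ^ r * x ^ (r - 1) * Real.exp (-(μ * x)) / Real.Gamma r < δ :=
    htend.eventually_lt_const hδ0
  have hev2 : ∀ᶠ x in nhdsWithin (0:ℝ) (Set.Ioi 0), x ∈ Set.Ioi (0:ℝ) :=
    eventually_mem_nhdsWithin
  have hev3 : ∀ᶠ x in nhdsWithin (0:ℝ) (Set.Ioi 0), x < 1 :=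
    eventually_nhdsWithin_of_eventually_nhds (eventually_lt_nhds (by norm_num))
  obtain ⟨x, ⟨hxlt, hxmem⟩, hx3⟩ := ((hev1.and hev2).and hev3).exists
  have hkey := key x hxmem hx3
  have hx := h x hxmem
  rw [← hx] at hkey
  exact absurd hkey (not_le.2 hxlt)
end

section
/- Let 0 < r < 1 and μ > 0, and let G_{r,1}, G_{1−r,1} be independent gamma random variables with shapes r, 1−r and rate 1. Then the random variable Z_{r,μ} = μ(G_{r,1} + G_{1−r,1})/G_{r,1} has probability density p(z; r, μ) = μ^r/(Γ(1−r)Γ(r)) · 1{z ≥ μ}/((z−μ)^r z) on (0,∞). -/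
open MeasureTheory ProbabilityTheory Real Set

open scoped ENNReal

lemma aux_meas (c G : ℝ) :
    Measurable fun x : ℝ => ENNReal.ofReal (if 0 < x then x ^ c * Real.exp (-x) / G else 0) := by
  refine Measurable.ennreal_ofReal (Measurable.ite measurableSet_Ioi ?_ measurable_const)
  exact ((measurable_id'.pow_const c).mul (Real.measurable_exp.comp measurable_neg)).div_const G

lemma aux_exp {b : ℝ} (hb : 0 < b) :
    ∫⁻ x in Ioi (0:ℝ), ENNReal.ofReal (rexp (-(b * x))) = ENNReal.ofReal b⁻¹ := by
  have h1 := ProbabilityTheory.lintegral_exponentialPDF_eq_one hb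
  have h2 : (∫⁻ x, exponentialPDF b x)
      = ENNReal.ofReal b * ∫⁻ x in Ioi (0:ℝ), ENNReal.ofReal (rexp (-(b * x))) := by
    rw [← lintegral_add_compl (exponentialPDF b) measurableSet_Ici (μ := volume)]
    have hIio : ∫⁻ x in (Ici (0:ℝ))ᶜ, exponentialPDF b x = 0 := by
      rw [compl_Ici, setLIntegral_congr_fun measurableSet_Iio
        (fun ⦃x⦄ (hx : x < 0) => exponentialPDF_of_neg hx)]
      simp
    rw [hIio, add_zero, ← restrict_Ioi_eq_restrict_Ici,
      setLIntegral_congr_fun measurableSet_Ioi (fun ⦃x⦄ (hx : 0 < x) => by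
        rw [exponentialPDF_of_nonneg hx.le, ENNReal.ofReal_mul hb.le]),
      lintegral_const_mul _ (f := fun x : ℝ => ENNReal.ofReal (rexp (-(b * x))))
        (((measurable_const_mul b).neg.exp).ennreal_ofReal)]
  rw [h2] at h1
  have hb0 : ENNReal.ofReal b ≠ 0 := by simp [hb]
  calc ∫⁻ x in Ioi (0:ℝ), ENNReal.ofReal (rexp (-(b * x)))
      = (ENNReal.ofReal b)⁻¹ * (ENNReal.ofReal b *
          ∫⁻ x in Ioi (0:ℝ), ENNReal.ofReal (rexp (-(b * x)))) := by
        rw [← mul_assoc, ENNReal.inv_mul_cancel hb0 ENNReal.ofReal_ne_top, one_mul]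
    _ = (ENNReal.ofReal b)⁻¹ := by rw [h1, mul_one]
    _ = ENNReal.ofReal b⁻¹ := (ENNReal.ofReal_inv_of_pos hb).symm

/-- For `0 < r < 1` and `μ > 0`, the random variable
`Z = μ (G₁ + G₂) / G₁`, with `G₁, G₂` independent gamma variables of shapes `r`, `1-r`
and rate 1, has the Gleser density `p(z; r, μ)`. -/
theorem gleser_mixing_rv_density {Ω : Type*} [MeasurableSpace Ω] (P : Measure Ω)
    [IsProbabilityMeasure P] (G₁ G₂ : Ω → ℝ) (hG₁ : Measurable G₁) (hG₂ : Measurable G₂)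
    (r μ : ℝ) (hr0 : 0 < r) (hr1 : r < 1) (hμ : 0 < μ)
    (h₁ : Measure.map G₁ P = volume.withDensity fun x =>
      ENNReal.ofReal (if 0 < x then x ^ (r - 1) * Real.exp (-x) / Real.Gamma r else 0))
    (h₂ : Measure.map G₂ P = volume.withDensity fun x =>
      ENNReal.ofReal (if 0 < x then x ^ ((1 - r) - 1) * Real.exp (-x) / Real.Gamma (1 - r) else 0))
    (hindep : IndepFun G₁ G₂ P) :
    Measure.map (fun ω => μ * (G₁ ω + G₂ ω) / G₁ ω) P = volume.withDensity fun z =>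
      ENNReal.ofReal
        (μ ^ r / (Real.Gamma (1 - r) * Real.Gamma r) *
          (if μ ≤ z then 1 / ((z - μ) ^ r * z) else 0)) := by
  have hΓr : 0 < Real.Gamma r := Real.Gamma_pos_of_pos hr0
  have hΓ1r : 0 < Real.Gamma (1 - r) := Real.Gamma_pos_of_pos (by linarith)
  set f₁ : ℝ → ℝ≥0∞ := fun x =>
    ENNReal.ofReal (if 0 < x then x ^ (r - 1) * Real.exp (-x) / Real.Gamma r else 0) with hf₁def
  set f₂ : ℝ → ℝ≥0∞ := fun x =>
    ENNReal.ofReal (if 0 < x then x ^ ((1 - r) - 1) * Real.exp (-x) / Real.Gamma (1 - r) else 0)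
    with hf₂def
  have hf₁m : Measurable f₁ := aux_meas _ _
  have hf₂m : Measurable f₂ := aux_meas _ _
  have hf₁0 : ∀ x : ℝ, ¬ 0 < x → f₁ x = 0 := fun x hx => by
    simp only [hf₁def, if_neg hx, ENNReal.ofReal_zero]
  have hf₂0 : ∀ x : ℝ, ¬ 0 < x → f₂ x = 0 := fun x hx => by
    simp only [hf₂def, if_neg hx, ENNReal.ofReal_zero]
  set pd : ℝ → ℝ≥0∞ := fun z => ENNReal.ofReal
      (μ ^ r / (Real.Gamma (1 - r) * Real.Gamma r) *
        (if μ ≤ z then 1 / ((z - μ) ^ r * z) else 0)) with hpddef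
  have hφ : Measurable (fun p : ℝ × ℝ => μ * (p.1 + p.2) / p.1) :=
    ((measurable_fst.add measurable_snd).const_mul μ).div measurable_fst
  have hjoint : Measure.map (fun ω => (G₁ ω, G₂ ω)) P
      = (volume.withDensity f₁).prod (volume.withDensity f₂) := by
    rw [← h₁, ← h₂]
    exact (indepFun_iff_map_prod_eq_prod_map_map hG₁.aemeasurable hG₂.aemeasurable).mp hindep
  have hcomp : (fun ω => μ * (G₁ ω + G₂ ω) / G₁ ω)
      = (fun p : ℝ × ℝ => μ * (p.1 + p.2) / p.1) ∘ fun ω => (G₁ ω, G₂ ω) := rfl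
  rw [hcomp, ← Measure.map_map hφ (hG₁.prodMk hG₂), hjoint]
  -- key pointwise density identity
  have key : ∀ z : ℝ,
      (∫⁻ x, f₁ x * (ENNReal.ofReal (x / μ) * f₂ (x / μ * z - x))) = pd z := by
    intro z
    by_cases hz : μ < z
    · -- main case
      set k : ℝ := (z - μ) / μ with hkdef
      have hk : 0 < k := div_pos (by linarith) hμ
      set C : ℝ := k ^ (-r) / (μ * (Real.Gamma r * Real.Gamma (1 - r))) with hCdef
      have hC : 0 ≤ C := by positivity
      have hpt : ∀ x : ℝ, f₁ x * (ENNReal.ofReal (x / μ) * f₂ (x / μ * z - x))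
          = (Ioi (0:ℝ)).indicator (fun x => ENNReal.ofReal (C * rexp (-(z / μ * x)))) x := by
        intro x
        by_cases hx : 0 < x
        · rw [Set.indicator_of_mem (mem_Ioi.mpr hx)]
          have harg : x / μ * z - x = x * k := by
            field_simp [hkdef]
            rw [hkdef, mul_div_assoc']; exact (mul_div_cancel_left₀ _ hμ.ne').symm
          have hargpos : 0 < x * k := mul_pos hx hk
          have hf₁x : f₁ x = ENNReal.ofReal (x ^ (r - 1) * rexp (-x) / Real.Gamma r) := by
            simp only [hf₁def, if_pos hx]
          have hf₂x : f₂ (x / μ * z - x)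
              = ENNReal.ofReal ((x * k) ^ (-r) * rexp (-(x * k)) / Real.Gamma (1 - r)) := by
            simp only [hf₂def, harg, if_pos hargpos]
            norm_num
          rw [hf₁x, hf₂x, ← ENNReal.ofReal_mul (by positivity), ← ENNReal.ofReal_mul (by positivity)]
          congr 1
          have hxx : x ^ (r - 1) * x * x ^ (-r) = 1 := by
            rw [mul_comm (x ^ (r - 1)) x, mul_assoc, ← Real.rpow_add hx,
              show r - 1 + -r = -1 by ring, Real.rpow_neg_one, mul_inv_cancel₀ hx.ne']
          have hexp : rexp (-x) * rexp (-(x * k)) = rexp (-(z / μ * x)) := by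
            rw [← Real.exp_add]
            congr 1
            field_simp [hkdef]
            rw [hkdef]; simp only [add_mul, neg_mul, div_mul_cancel₀ _ hμ.ne']; ring
          calc x ^ (r - 1) * rexp (-x) / Real.Gamma r
                * (x / μ * ((x * k) ^ (-r) * rexp (-(x * k)) / Real.Gamma (1 - r)))
              = (x ^ (r - 1) * x * x ^ (-r)) * (k ^ (-r) * (rexp (-x) * rexp (-(x * k))))
                / (μ * (Real.Gamma r * Real.Gamma (1 - r))) := by
                rw [Real.mul_rpow hx.le hk.le]; ring
            _ = C * rexp (-(z / μ * x)) := by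
                rw [hxx, hexp, one_mul, hCdef]; ring
        · rw [Set.indicator_of_notMem (by simpa using hx), hf₁0 x hx, zero_mul]
      calc (∫⁻ x, f₁ x * (ENNReal.ofReal (x / μ) * f₂ (x / μ * z - x)))
          = ∫⁻ x, (Ioi (0:ℝ)).indicator (fun x => ENNReal.ofReal (C * rexp (-(z / μ * x)))) x := by
            exact lintegral_congr hpt
        _ = ∫⁻ x in Ioi (0:ℝ), ENNReal.ofReal (C * rexp (-(z / μ * x))) := by
            rw [lintegral_indicator measurableSet_Ioi]
        _ = ENNReal.ofReal C * ∫⁻ x in Ioi (0:ℝ), ENNReal.ofReal (rexp (-(z / μ * x))) := by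
            simp_rw [ENNReal.ofReal_mul hC]
            rw [lintegral_const_mul _ (f := fun x : ℝ => ENNReal.ofReal (rexp (-(z / μ * x))))
              (((measurable_const_mul (z / μ)).neg.exp).ennreal_ofReal)]
        _ = ENNReal.ofReal C * ENNReal.ofReal ((z / μ)⁻¹) := by
            rw [aux_exp (div_pos (by linarith) hμ)]
        _ = pd z := by
            rw [← ENNReal.ofReal_mul hC]
            have hzμ : 0 < z - μ := by linarith
            have heq : C * (z / μ)⁻¹ = μ ^ r / (Real.Gamma (1 - r) * Real.Gamma r) *
                (if μ ≤ z then 1 / ((z - μ) ^ r * z) else 0) := by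
              rw [if_pos hz.le, hCdef, hkdef,
                Real.div_rpow hzμ.le hμ.le, Real.rpow_neg hzμ.le, Real.rpow_neg hμ.le, inv_div]
              have h1 : (z - μ) ^ r ≠ 0 := (Real.rpow_pos_of_pos hzμ r).ne'
              have h2 : (μ:ℝ) ^ r ≠ 0 := (Real.rpow_pos_of_pos hμ r).ne'
              have h3 : μ ≠ 0 := hμ.ne'
              have h4 : z ≠ 0 := (show (0:ℝ) < z by linarith).ne'
              have h5 : Real.Gamma r ≠ 0 := hΓr.ne'
              have h6 : Real.Gamma (1 - r) ≠ 0 := hΓ1r.ne'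
              field_simp
            simp only [hpddef]
            exact congrArg ENNReal.ofReal heq
    · -- z ≤ μ : both sides vanish
      have hzero : ∀ x : ℝ, f₁ x * (ENNReal.ofReal (x / μ) * f₂ (x / μ * z - x)) = 0 := by
        intro x
        by_cases hx : 0 < x
        · have harg : ¬ 0 < x / μ * z - x := by
            have h1 : x / μ * z ≤ x / μ * μ :=
              mul_le_mul_of_nonneg_left (not_lt.1 hz) (by positivity)
            rw [div_mul_cancel₀ x hμ.ne'] at h1
            linarith
          rw [hf₂0 _ harg, mul_zero, mul_zero]
        · rw [hf₁0 x hx, zero_mul]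
      rw [lintegral_congr hzero, lintegral_zero]
      have h0 : (if μ ≤ z then 1 / ((z - μ) ^ r * z) else 0) = 0 := by
        rcases le_or_gt μ z with h | h
        · have hzμ : z = μ := le_antisymm (not_lt.1 hz) h
          rw [if_pos h, hzμ, sub_self, Real.zero_rpow hr0.ne', zero_mul, div_zero]
        · rw [if_neg (not_le.2 h)]
      simp only [hpddef, h0, mul_zero, ENNReal.ofReal_zero]
  -- measure computation
  ext s hs
  rw [Measure.map_apply hφ hs, withDensity_apply _ hs,
    Measure.prod_apply (hφ hs),
    lintegral_withDensity_eq_lintegral_mul volume hf₁m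
      (measurable_measure_prodMk_left (hφ hs))]
  have hsecm : ∀ x : ℝ, MeasurableSet (Prod.mk x ⁻¹' ((fun p : ℝ × ℝ => μ * (p.1 + p.2) / p.1) ⁻¹' s)) :=
    fun x => measurable_prodMk_left (hφ hs)
  -- K x z
  set K : ℝ → ℝ → ℝ≥0∞ := fun x z =>
    f₁ x * (ENNReal.ofReal (x / μ) * f₂ (x / μ * z - x)) * s.indicator 1 z with hKdef
  have hKm : AEMeasurable (Function.uncurry K) ((volume : Measure ℝ).prod volume) := by
    refine Measurable.aemeasurable ?_
    refine Measurable.mul (Measurable.mul (hf₁m.comp measurable_fst) ?_) ?_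
    · refine Measurable.mul ?_ (hf₂m.comp ?_)
      · exact (measurable_fst.div_const μ).ennreal_ofReal
      · exact ((measurable_fst.div_const μ).mul measurable_snd).sub measurable_fst
    · exact (measurable_one.indicator hs).comp measurable_snd
  have hstep : ∀ x : ℝ, f₁ x *
      (volume.withDensity f₂) (Prod.mk x ⁻¹' ((fun p : ℝ × ℝ => μ * (p.1 + p.2) / p.1) ⁻¹' s))
      = ∫⁻ z, K x z := by
    intro x
    by_cases hx : 0 < x
    · have hc : 0 < x / μ := div_pos hx hμ
      -- change of variables in the section measure
      have hψm : Measurable fun z : ℝ => x / μ * z - x :=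
        (measurable_const_mul (x / μ)).sub_const x
      have hmapψ : Measure.map (fun z : ℝ => x / μ * z - x) volume
          = ENNReal.ofReal (x / μ)⁻¹ • volume := by
        have : (fun z : ℝ => x / μ * z - x) = (fun t : ℝ => t + (-x)) ∘ (fun z => x / μ * z) := by
          funext z; simp [sub_eq_add_neg]
        rw [this, ← Measure.map_map (measurable_add_const (-x)) (measurable_const_mul (x / μ)),
          Real.map_volume_mul_left hc.ne', Measure.map_smul,
          map_add_right_eq_self volume (-x), abs_of_pos (inv_pos.2 hc)]
      have hvol : (volume : Measure ℝ)
          = ENNReal.ofReal (x / μ) • Measure.map (fun z : ℝ => x / μ * z - x) volume := by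
        rw [hmapψ, smul_smul, ← ENNReal.ofReal_mul hc.le, mul_inv_cancel₀ hc.ne',
          ENNReal.ofReal_one, one_smul]
      have hgm : Measurable ((Prod.mk x ⁻¹'
          ((fun p : ℝ × ℝ => μ * (p.1 + p.2) / p.1) ⁻¹' s)).indicator f₂) :=
        hf₂m.indicator (hsecm x)
      have hcv : (volume.withDensity f₂) (Prod.mk x ⁻¹'
            ((fun p : ℝ × ℝ => μ * (p.1 + p.2) / p.1) ⁻¹' s))
          = ENNReal.ofReal (x / μ) * ∫⁻ z, f₂ (x / μ * z - x) * s.indicator 1 z := by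
        rw [withDensity_apply _ (hsecm x), ← lintegral_indicator (hsecm x)]
        conv_lhs => rw [hvol]
        rw [lintegral_smul_measure, lintegral_map hgm hψm]
        congr 1
        refine lintegral_congr fun z => ?_
        have hmem : (x / μ * z - x) ∈ Prod.mk x ⁻¹'
            ((fun p : ℝ × ℝ => μ * (p.1 + p.2) / p.1) ⁻¹' s) ↔ z ∈ s := by
          simp only [mem_preimage]
          have : μ * (x + (x / μ * z - x)) / x = z := by
            field_simp
            ring
          rw [this]
        by_cases hzs : z ∈ s
        · rw [indicator_of_mem (hmem.2 hzs), indicator_of_mem hzs]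
          simp
        · rw [indicator_of_notMem (fun h => hzs (hmem.1 h)), indicator_of_notMem hzs]
          simp
      rw [hcv, hKdef]
      rw [← lintegral_const_mul _ (by
        exact ((hf₂m.comp hψm).mul ((measurable_one.indicator hs))))]
      rw [← lintegral_const_mul _ (by
        exact (measurable_const.mul ((hf₂m.comp hψm).mul ((measurable_one.indicator hs)))))]
      refine lintegral_congr fun z => ?_
      ring
    · rw [hf₁0 x hx, zero_mul, hKdef]
      symm
      simp only [hf₁0 x hx, zero_mul]
      exact lintegral_zero
  calc (∫⁻ x, (f₁ * fun x => (volume.withDensity f₂)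
        (Prod.mk x ⁻¹' ((fun p : ℝ × ℝ => μ * (p.1 + p.2) / p.1) ⁻¹' s))) x)
      = ∫⁻ x, ∫⁻ z, K x z := by
        refine lintegral_congr fun x => ?_
        simpa using hstep x
    _ = ∫⁻ z, ∫⁻ x, K x z := lintegral_lintegral_swap hKm
    _ = ∫⁻ z, pd z * s.indicator 1 z := by
        refine lintegral_congr fun z => ?_
        rw [hKdef]
        simp only
        have hm : Measurable fun x : ℝ => f₁ x * (ENNReal.ofReal (x / μ) * f₂ (x / μ * z - x)) :=
          hf₁m.mul (((measurable_id'.div_const μ).ennreal_ofReal).mul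
            (hf₂m.comp (((measurable_id'.div_const μ).mul_const z).sub measurable_id')))
        rw [lintegral_mul_const _ hm, key z]
    _ = ∫⁻ z in s, pd z := by
        rw [← lintegral_indicator hs]
        refine lintegral_congr fun z => ?_
        by_cases hzs : z ∈ s
        · rw [indicator_of_mem hzs]; simp [hzs]
        · rw [indicator_of_notMem hzs]; simp [hzs]
end

section
/- For 0 < β < α ≤ 1, the β-th moment of the one-sided strictly stable random variable S_{α,1} equals E[S_{α,1}^β] = Γ(1 − β/α)/Γ(1 − β). -/
open MeasureTheory Real Set

open Filter Topology
open scoped ENNReal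

lemma my_measurable_rpow_const (q : ℝ) : Measurable fun x : ℝ => x ^ q :=
  measurable_of_continuousOn_compl_singleton 0 <|
    continuousOn_of_forall_continuousAt fun x hx => Real.continuousAt_rpow_const x q (Or.inl hx)

lemma my_one_sub_exp_le (t : ℝ) : 1 - Real.exp (-t) ≤ t := by
  have := Real.add_one_le_exp (-t); linarith

lemma my_one_sub_exp_nonneg {t : ℝ} (ht : 0 ≤ t) : 0 ≤ 1 - Real.exp (-t) := by
  have : Real.exp (-t) ≤ 1 := Real.exp_le_one_iff.2 (by linarith)
  linarith

lemma my_integrableOn_aux {c p b : ℝ} (hc : 0 < c) (hcp : c < p) (hb : 0 < b) :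
    IntegrableOn (fun s : ℝ => s ^ (-c - 1) * (1 - Real.exp (-(b * s ^ p)))) (Ioi 0) := by
  have hm : Measurable (fun s : ℝ => s ^ (-c - 1) * (1 - Real.exp (-(b * s ^ p)))) :=
    (my_measurable_rpow_const _).mul
      ((((my_measurable_rpow_const p).const_mul b).neg.exp).const_sub 1)
  have h1 : IntegrableOn (fun s : ℝ => s ^ (-c - 1) * (1 - Real.exp (-(b * s ^ p)))) (Ioc 0 1) := by
    refine Integrable.mono' (g := fun s => b * s ^ (p - c - 1))
      (((intervalIntegral.intervalIntegrable_rpow' (by linarith : (-1:ℝ) < p - c - 1)).1).const_mul b)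
      hm.aestronglyMeasurable ?_
    filter_upwards [ae_restrict_mem measurableSet_Ioc] with s hs
    have hs0 : 0 < s := hs.1
    have hbp : 0 ≤ b * s ^ p := by positivity
    have h1e : 1 - Real.exp (-(b * s ^ p)) ≤ b * s ^ p := my_one_sub_exp_le _
    have h0e : 0 ≤ 1 - Real.exp (-(b * s ^ p)) := my_one_sub_exp_nonneg hbp
    rw [Real.norm_eq_abs, abs_of_nonneg (mul_nonneg (Real.rpow_nonneg hs0.le _) h0e)]
    calc s ^ (-c - 1) * (1 - Real.exp (-(b * s ^ p)))
        ≤ s ^ (-c - 1) * (b * s ^ p) :=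
          mul_le_mul_of_nonneg_left h1e (Real.rpow_nonneg hs0.le _)
      _ = b * s ^ (p - c - 1) := by
          rw [mul_comm (b) (s ^ p), mul_comm b _, ← mul_assoc, ← Real.rpow_add hs0]
          ring_nf
  have h2 : IntegrableOn (fun s : ℝ => s ^ (-c - 1) * (1 - Real.exp (-(b * s ^ p)))) (Ioi 1) := by
    refine Integrable.mono' (g := fun s : ℝ => s ^ (-c - 1))
      (integrableOn_Ioi_rpow_of_lt (by linarith) one_pos)
      hm.aestronglyMeasurable ?_
    filter_upwards [ae_restrict_mem measurableSet_Ioi] with s hs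
    have hs0 : (0:ℝ) < s := lt_trans one_pos hs
    have hbp : 0 ≤ b * s ^ p := by positivity
    have h0e : 0 ≤ 1 - Real.exp (-(b * s ^ p)) := my_one_sub_exp_nonneg hbp
    have h1e : 1 - Real.exp (-(b * s ^ p)) ≤ 1 := by
      have := Real.exp_pos (-(b * s ^ p)); linarith
    rw [Real.norm_eq_abs, abs_of_nonneg (mul_nonneg (Real.rpow_nonneg hs0.le _) h0e)]
    calc s ^ (-c - 1) * (1 - Real.exp (-(b * s ^ p)))
        ≤ s ^ (-c - 1) * 1 := mul_le_mul_of_nonneg_left h1e (Real.rpow_nonneg hs0.le _)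
      _ = s ^ (-c - 1) := mul_one _
  have := h1.union h2
  rwa [Ioc_union_Ioi_eq_Ioi (zero_le_one)] at this

lemma my_mellin_one_sub_exp {c b : ℝ} (hc0 : 0 < c) (hc1 : c < 1) (hb : 0 < b) :
    ∫ s in Ioi (0:ℝ), s ^ (-c - 1) * (1 - Real.exp (-(s * b))) =
      Real.Gamma (1 - c) / c * b ^ c := by
  set u : ℝ → ℝ := fun s => 1 - Real.exp (-(s * b)) with hu_def
  set u' : ℝ → ℝ := fun s => b * Real.exp (-(s * b)) with hu'_def
  set v : ℝ → ℝ := fun s => -(1 / c) * s ^ (-c) with hv_def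
  set v' : ℝ → ℝ := fun s => s ^ (-c - 1) with hv'_def
  have hu : ∀ x ∈ Ioi (0:ℝ), HasDerivAt u (u' x) x := by
    intro x _
    have h1 : HasDerivAt (fun s : ℝ => s * b) b x := by
      simpa using (hasDerivAt_id x).mul_const b
    have h2 : HasDerivAt (fun s : ℝ => Real.exp (-(s * b))) (Real.exp (-(x * b)) * -b) x :=
      (h1.neg).exp
    have := h2.const_sub 1
    refine this.congr_deriv ?_
    simp [hu'_def]; ring
  have hv : ∀ x ∈ Ioi (0:ℝ), HasDerivAt v (v' x) x := by
    intro x hx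
    have h1 : HasDerivAt (fun s : ℝ => s ^ (-c)) (-c * x ^ (-c - 1)) x :=
      Real.hasDerivAt_rpow_const (Or.inl (ne_of_gt hx))
    have := h1.const_mul (-(1 / c))
    refine this.congr_deriv ?_
    field_simp [hv'_def]
    rfl
  have huv' : IntegrableOn (u * v') (Ioi 0) := by
    have := my_integrableOn_aux hc0 hc1 hb
    refine (this.congr_fun (fun s hs => ?_) measurableSet_Ioi)
    simp only [Pi.mul_apply, hu_def, hv'_def, Real.rpow_one]
    rw [mul_comm b s]; ring
  have hu'v : IntegrableOn (u' * v) (Ioi 0) := by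
    have h0 : IntegrableOn (fun x : ℝ => x ^ (-c) * Real.exp (-b * x ^ (1:ℝ))) (Ioi 0) :=
      integrableOn_rpow_mul_exp_neg_mul_rpow (by linarith) one_pos hb
    have h1 : IntegrableOn (fun x : ℝ => -(b / c) * (x ^ (-c) * Real.exp (-b * x ^ (1:ℝ))))
        (Ioi 0) := h0.const_mul _
    refine (h1.congr_fun (fun s hs => ?_) measurableSet_Ioi)
    simp only [Pi.mul_apply, hu'_def, hv_def, Real.rpow_one, neg_mul]
    rw [mul_comm b s]
    ring
  have h_zero : Tendsto (u * v) (𝓝[>] (0:ℝ)) (𝓝 0) := by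
    have hbound : Tendsto (fun x : ℝ => (b / c) * x ^ (1 - c)) (𝓝[>] (0:ℝ)) (𝓝 0) := by
      have hcont : ContinuousAt (fun x : ℝ => x ^ (1 - c)) 0 :=
        Real.continuousAt_rpow_const 0 (1 - c) (Or.inr (by linarith))
      have : Tendsto (fun x : ℝ => x ^ (1 - c)) (𝓝[>] (0:ℝ)) (𝓝 ((0:ℝ) ^ (1 - c))) :=
        (hcont.tendsto).mono_left nhdsWithin_le_nhds
      rw [Real.zero_rpow (by linarith : (1:ℝ) - c ≠ 0)] at this
      simpa using this.const_mul (b / c)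
    have hsq0 : Tendsto (fun x : ℝ => ((1 - Real.exp (-(x * b))) * ((1/c) * x ^ (-c))))
        (𝓝[>] (0:ℝ)) (𝓝 0) := by
      refine (squeeze_zero' ?_ ?_ hbound)
      · filter_upwards [self_mem_nhdsWithin] with x hx
        have hx0 : (0:ℝ) < x := hx
        exact mul_nonneg (my_one_sub_exp_nonneg (by positivity))
          (mul_nonneg (by positivity) (Real.rpow_nonneg hx0.le _))
      · filter_upwards [self_mem_nhdsWithin] with x hx
        have hx0 : (0:ℝ) < x := hx
        have h1 : 1 - Real.exp (-(x * b)) ≤ x * b := my_one_sub_exp_le _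
        calc (1 - Real.exp (-(x * b))) * ((1/c) * x ^ (-c))
            ≤ (x * b) * ((1/c) * x ^ (-c)) :=
              mul_le_mul_of_nonneg_right h1
                (mul_nonneg (by positivity) (Real.rpow_nonneg hx0.le _))
          _ = (b / c) * (x * x ^ (-c)) := by ring
          _ = (b / c) * x ^ (1 - c) := by
              nth_rewrite 1 [← Real.rpow_one x]
              rw [← Real.rpow_add hx0, show (1:ℝ) + -c = 1 - c by ring]
    have hsq := hsq0.neg
    rw [neg_zero] at hsq
    refine hsq.congr ?_
    intro x
    simp only [Pi.mul_apply, hu_def, hv_def]; ring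
  have h_infty : Tendsto (u * v) atTop (𝓝 0) := by
    have h1 : Tendsto u atTop (𝓝 1) := by
      have hbx : Tendsto (fun x : ℝ => -(x * b)) atTop atBot := by
        have : Tendsto (fun x : ℝ => x * b) atTop atTop :=
          Tendsto.atTop_mul_const hb tendsto_id
        exact tendsto_neg_atBot_iff.mpr this
      have : Tendsto (fun x : ℝ => Real.exp (-(x * b))) atTop (𝓝 0) :=
        Real.tendsto_exp_atBot.comp hbx
      simpa using this.const_sub 1
    have h2 : Tendsto v atTop (𝓝 0) := by
      have h := (tendsto_rpow_neg_atTop hc0).const_mul (-(1/c))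
      rw [mul_zero] at h
      exact h
    have := h1.mul h2
    rw [mul_zero] at this
    exact this
  have key := integral_Ioi_mul_deriv_eq_deriv_mul hu hv huv' hu'v h_zero h_infty
  have hGamma : ∫ x in Ioi (0:ℝ), u' x * v x = -(b / c) * ((1 / b) ^ (1 - c) * Real.Gamma (1 - c)) := by
    rw [← integral_rpow_mul_exp_neg_mul_Ioi (by linarith : (0:ℝ) < 1 - c) hb, ← integral_const_mul]
    refine setIntegral_congr_fun measurableSet_Ioi (fun x hx => ?_)
    simp only [hu'_def, hv_def]
    rw [show (1:ℝ) - c - 1 = -c by ring, mul_comm b x]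
    ring
  rw [hGamma] at key
  have hbp : (1 / b) ^ (1 - c) = b ^ (c - 1) := by
    rw [one_div, ← Real.rpow_neg_one b, ← Real.rpow_mul hb.le]
    congr 1
    ring
  have hfinal : ∫ x in Ioi (0:ℝ), u x * v' x = Real.Gamma (1 - c) / c * b ^ c := by
    have hthis : b * b ^ (c - 1) = b ^ c := by
      nth_rewrite 1 [← Real.rpow_one b]
      rw [← Real.rpow_add hb]
      norm_num
    rw [key, hbp, ← hthis]
    ring
  rw [← hfinal]
  refine setIntegral_congr_fun measurableSet_Ioi (fun x hx => ?_)
  simp only [hu_def, hv'_def]; ring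

lemma my_mellin_stable {a b : ℝ} (hb0 : 0 < b) (hba : b < a) (ha0 : 0 < a) :
    ∫ s in Ioi (0:ℝ), s ^ (-b - 1) * (1 - Real.exp (-(s ^ a))) = Real.Gamma (1 - b / a) / b := by
  have hinv : (0:ℝ) < a⁻¹ := inv_pos.mpr ha0
  rw [← integral_comp_rpow_Ioi_of_pos
    (g := fun s : ℝ => s ^ (-b - 1) * (1 - Real.exp (-(s ^ a)))) hinv]
  have heq : ∀ x ∈ Ioi (0:ℝ),
      (a⁻¹ * x ^ (a⁻¹ - 1)) • ((x ^ a⁻¹) ^ (-b - 1) * (1 - Real.exp (-((x ^ a⁻¹) ^ a)))) =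
      a⁻¹ * (x ^ (-(b / a) - 1) * (1 - Real.exp (-(x * 1)))) := by
    intro x hx
    have hx0 : (0:ℝ) < x := hx
    rw [smul_eq_mul, ← Real.rpow_mul hx0.le a⁻¹ a, inv_mul_cancel₀ ha0.ne', Real.rpow_one,
      ← Real.rpow_mul hx0.le a⁻¹ (-b - 1), mul_one]
    rw [mul_assoc, ← mul_assoc (x ^ (a⁻¹ - 1)), ← Real.rpow_add hx0]
    rw [show a⁻¹ - 1 + a⁻¹ * (-b - 1) = -(b / a) - 1 by field_simp; ring]
  rw [setIntegral_congr_fun measurableSet_Ioi heq, integral_const_mul,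
    my_mellin_one_sub_exp (div_pos hb0 ha0) ((div_lt_one ha0).mpr hba) one_pos,
    Real.one_rpow]
  field_simp

lemma my_integrableOn_lin {c b : ℝ} (hc0 : 0 < c) (hc1 : c < 1) (hb : 0 < b) :
    IntegrableOn (fun s : ℝ => s ^ (-c - 1) * (1 - Real.exp (-(s * b)))) (Ioi 0) := by
  refine ((my_integrableOn_aux hc0 hc1 hb).congr_fun (fun s hs => ?_) measurableSet_Ioi)
  dsimp only
  rw [Real.rpow_one, mul_comm b s]

lemma my_integrableOn_pow {c a : ℝ} (hc0 : 0 < c) (hca : c < a) :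
    IntegrableOn (fun s : ℝ => s ^ (-c - 1) * (1 - Real.exp (-(s ^ a)))) (Ioi 0) := by
  refine ((my_integrableOn_aux hc0 hca one_pos).congr_fun (fun s hs => ?_) measurableSet_Ioi)
  dsimp only
  rw [one_mul]

/-- For `0 < β < α ≤ 1`, the `β`-th moment of the one-sided strictly stable random
variable `S` with Laplace transform `exp (-s^α)` equals `Γ(1 - β/α)/Γ(1 - β)`. -/
theorem stable_moment (α β : ℝ) (hβ0 : 0 < β) (hβα : β < α) (hα1 : α ≤ 1)
    {Ω : Type*} [MeasurableSpace Ω] (P : Measure Ω) [IsProbabilityMeasure P]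
    (S : Ω → ℝ) (hS : Measurable S) (hSpos : ∀ᵐ ω ∂P, 0 < S ω)
    (hLaplace : ∀ s : ℝ, 0 ≤ s →
      ∫ ω, Real.exp (-(s * S ω)) ∂P = Real.exp (-(s ^ α))) :
    ∫ ω, S ω ^ β ∂P = Real.Gamma (1 - β / α) / Real.Gamma (1 - β) := by
  have hα0 : 0 < α := lt_trans hβ0 hβα
  have hβ1 : β < 1 := lt_of_lt_of_le hβα hα1
  have hΓβ : 0 < Real.Gamma (1 - β) := Real.Gamma_pos_of_pos (by linarith)
  have hΓα : 0 < Real.Gamma (1 - β / α) :=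
    Real.Gamma_pos_of_pos (by rw [sub_pos, div_lt_one hα0]; exact hβα)
  set G : ℝ := Real.Gamma (1 - β / α) / Real.Gamma (1 - β) with hG_def
  set C : ℝ≥0∞ := ENNReal.ofReal (β / Real.Gamma (1 - β)) with hC_def
  set F : Ω → ℝ → ℝ := fun ω s => s ^ (-β - 1) * (1 - Real.exp (-(s * S ω))) with hF_def
  -- pointwise identity
  have h1 : ∀ᵐ ω ∂P, ENNReal.ofReal (S ω ^ β) =
      C * ∫⁻ s in Ioi (0:ℝ), ENNReal.ofReal (F ω s) := by
    filter_upwards [hSpos] with ω hω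
    have hint := my_integrableOn_lin hβ0 hβ1 hω
    have hnn : 0 ≤ᵐ[volume.restrict (Ioi (0:ℝ))] fun s => F ω s := by
      filter_upwards [ae_restrict_mem measurableSet_Ioi] with s hs
      have hs0 : (0:ℝ) < s := hs
      exact mul_nonneg (Real.rpow_nonneg hs0.le _)
        (my_one_sub_exp_nonneg (by positivity))
    rw [← ofReal_integral_eq_lintegral_ofReal hint hnn, ← ENNReal.ofReal_mul
      (div_nonneg hβ0.le hΓβ.le)]
    congr 1
    rw [show (∫ s in Ioi (0:ℝ), F ω s) = Real.Gamma (1 - β) / β * S ω ^ β from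
      my_mellin_one_sub_exp hβ0 hβ1 hω]
    field_simp
  -- measurability for Tonelli
  have hFmeas : Measurable (Function.uncurry fun ω s => ENNReal.ofReal (F ω s)) := by
    refine Measurable.ennreal_ofReal ?_
    exact ((my_measurable_rpow_const (-β - 1)).comp measurable_snd).mul
      (((measurable_snd.mul (hS.comp measurable_fst)).neg.exp).const_sub 1)
  -- inner lintegral for fixed s
  have h2 : ∀ s ∈ Ioi (0:ℝ), (∫⁻ ω, ENNReal.ofReal (F ω s) ∂P) =
      ENNReal.ofReal (s ^ (-β - 1) * (1 - Real.exp (-(s ^ α)))) := by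
    intro s hs
    have hs0 : (0:ℝ) < s := hs
    have hexp_int : Integrable (fun ω => Real.exp (-(s * S ω))) P := by
      refine Integrable.mono' (integrable_const 1)
        (((hS.const_mul s).neg.exp).aestronglyMeasurable) ?_
      filter_upwards [hSpos] with ω hω
      rw [Real.norm_eq_abs, abs_of_nonneg (Real.exp_pos _).le]
      exact Real.exp_le_one_iff.2 (by nlinarith)
    have hone_int : Integrable (fun ω => 1 - Real.exp (-(s * S ω))) P :=
      (integrable_const 1).sub hexp_int
    have hnnω : 0 ≤ᵐ[P] fun ω => 1 - Real.exp (-(s * S ω)) := by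
      filter_upwards [hSpos] with ω hω
      exact my_one_sub_exp_nonneg (by positivity)
    have hval : (∫ ω, (1 - Real.exp (-(s * S ω))) ∂P) = 1 - Real.exp (-(s ^ α)) := by
      rw [integral_sub (integrable_const 1) hexp_int, hLaplace s hs0.le]
      simp
    calc (∫⁻ ω, ENNReal.ofReal (F ω s) ∂P)
        = ∫⁻ ω, ENNReal.ofReal (s ^ (-β - 1)) *
            ENNReal.ofReal (1 - Real.exp (-(s * S ω))) ∂P := by
          refine lintegral_congr fun ω => ?_
          rw [← ENNReal.ofReal_mul (Real.rpow_nonneg hs0.le _)]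
      _ = ENNReal.ofReal (s ^ (-β - 1)) *
            ∫⁻ ω, ENNReal.ofReal (1 - Real.exp (-(s * S ω))) ∂P :=
          lintegral_const_mul' _ _ ENNReal.ofReal_ne_top
      _ = ENNReal.ofReal (s ^ (-β - 1)) * ENNReal.ofReal (1 - Real.exp (-(s ^ α))) := by
          rw [← ofReal_integral_eq_lintegral_ofReal hone_int hnnω, hval]
      _ = ENNReal.ofReal (s ^ (-β - 1) * (1 - Real.exp (-(s ^ α)))) := by
          rw [← ENNReal.ofReal_mul (Real.rpow_nonneg hs0.le _)]
  -- the key lintegral computation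
  have key : (∫⁻ ω, ENNReal.ofReal (S ω ^ β) ∂P) = ENNReal.ofReal G := by
    have hint2 := my_integrableOn_pow hβ0 hβα
    have hnn2 : 0 ≤ᵐ[volume.restrict (Ioi (0:ℝ))]
        fun s => s ^ (-β - 1) * (1 - Real.exp (-(s ^ α))) := by
      filter_upwards [ae_restrict_mem measurableSet_Ioi] with s hs
      have hs0 : (0:ℝ) < s := hs
      exact mul_nonneg (Real.rpow_nonneg hs0.le _)
        (my_one_sub_exp_nonneg (by positivity))
    calc (∫⁻ ω, ENNReal.ofReal (S ω ^ β) ∂P)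
        = ∫⁻ ω, C * (∫⁻ s in Ioi (0:ℝ), ENNReal.ofReal (F ω s)) ∂P := lintegral_congr_ae h1
      _ = C * ∫⁻ ω, (∫⁻ s in Ioi (0:ℝ), ENNReal.ofReal (F ω s)) ∂P :=
          lintegral_const_mul' _ _ ENNReal.ofReal_ne_top
      _ = C * ∫⁻ s in Ioi (0:ℝ), (∫⁻ ω, ENNReal.ofReal (F ω s) ∂P) := by
          rw [lintegral_lintegral_swap hFmeas.aemeasurable]
      _ = C * ∫⁻ s in Ioi (0:ℝ),
            ENNReal.ofReal (s ^ (-β - 1) * (1 - Real.exp (-(s ^ α)))) := by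
          congr 1
          refine setLIntegral_congr_fun measurableSet_Ioi ?_
          exact h2
      _ = C * ENNReal.ofReal (∫ s in Ioi (0:ℝ),
            s ^ (-β - 1) * (1 - Real.exp (-(s ^ α)))) := by
          rw [ofReal_integral_eq_lintegral_ofReal hint2 hnn2]
      _ = C * ENNReal.ofReal (Real.Gamma (1 - β / α) / β) := by
          rw [my_mellin_stable hβ0 hβα hα0]
      _ = ENNReal.ofReal G := by
          rw [hC_def, ← ENNReal.ofReal_mul (div_nonneg hβ0.le hΓβ.le), hG_def]
          congr 1
          field_simp
  have hmeas : AEStronglyMeasurable (fun ω => S ω ^ β) P :=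
    ((my_measurable_rpow_const β).comp hS).aestronglyMeasurable
  have hnn : 0 ≤ᵐ[P] fun ω => S ω ^ β := by
    filter_upwards [hSpos] with ω hω
    exact Real.rpow_nonneg hω.le _
  rw [integral_eq_lintegral_of_nonneg_ae hnn hmeas, key,
    ENNReal.toReal_ofReal (div_nonneg hΓα.le hΓβ.le)]
end

section
/- For 0 < α < 1, the function v_α(x) = sin(πα) x^{α−1} / (π [1 + x^{2α} + 2 x^α cos(πα)]) is a probability density on (0,∞): it is nonnegative and ∫_0^∞ v_α(x) dx = 1. -/
open MeasureTheory Real Set Filter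

/-- For `0 < α < 1`, the function
`v_α(x) = sin(πα) x^{α-1} / (π [1 + x^{2α} + 2 x^α cos(πα)])`
is a probability density on `(0, ∞)`. -/
theorem ratio_stable_density (α : ℝ) (hα0 : 0 < α) (hα1 : α < 1) :
    (∀ x : ℝ, 0 < x →
        0 ≤ Real.sin (Real.pi * α) * x ^ (α - 1) /
          (Real.pi * (1 + x ^ (2 * α) + 2 * x ^ α * Real.cos (Real.pi * α)))) ∧
      ∫ x in Set.Ioi (0 : ℝ),
          Real.sin (Real.pi * α) * x ^ (α - 1) /
            (Real.pi * (1 + x ^ (2 * α) + 2 * x ^ α * Real.cos (Real.pi * α))) = 1 := by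
  have hπ := Real.pi_pos
  set θ := Real.pi * α with hθdef
  have hθ0 : 0 < θ := by positivity
  have hθπ : θ < Real.pi := by nlinarith
  set s := Real.sin θ with hsdef
  set c := Real.cos θ with hcdef
  have hs : 0 < s := Real.sin_pos_of_pos_of_lt_pi hθ0 hθπ
  have hsc : s ^ 2 + c ^ 2 = 1 := Real.sin_sq_add_cos_sq θ
  -- denominator rewrite for x > 0
  have hden : ∀ x : ℝ, 0 < x →
      1 + x ^ (2 * α) + 2 * x ^ α * c = (x ^ α + c) ^ 2 + s ^ 2 := by
    intro x hx
    have h2 : x ^ (2 * α) = (x ^ α) ^ 2 := by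
      rw [mul_comm, Real.rpow_mul hx.le]
      norm_num
    rw [h2]; nlinarith
  have hdenpos : ∀ u : ℝ, 0 < (u + c) ^ 2 + s ^ 2 := fun u => by positivity
  constructor
  · intro x hx
    apply div_nonneg
    · have := Real.sin_nonneg_of_nonneg_of_le_pi hθ0.le hθπ.le
      have : (0:ℝ) ≤ x ^ (α - 1) := Real.rpow_nonneg hx.le _
      positivity
    · rw [hden x hx]
      have := hdenpos (x ^ α)
      positivity
  · -- the integral
    set g : ℝ → ℝ := fun u => s / (α * Real.pi * ((u + c) ^ 2 + s ^ 2)) with hg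
    have hα : (α : ℝ) ≠ 0 := hα0.ne'
    have step1 : ∫ x in Set.Ioi (0 : ℝ),
        Real.sin (Real.pi * α) * x ^ (α - 1) /
          (Real.pi * (1 + x ^ (2 * α) + 2 * x ^ α * Real.cos (Real.pi * α)))
        = ∫ x in Set.Ioi (0 : ℝ), (|α| * x ^ (α - 1)) • g (x ^ α) := by
      apply setIntegral_congr_fun measurableSet_Ioi
      intro x hx
      simp only [smul_eq_mul, hg]
      rw [hden x hx, abs_of_pos hα0]
      have h1 : (x ^ α + c) ^ 2 + s ^ 2 ≠ 0 := (hdenpos _).ne'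
      field_simp
      ring
    rw [step1, MeasureTheory.integral_comp_rpow_Ioi g hα]
    -- now compute ∫ u in Ioi 0, g u
    have hF : ∀ u : ℝ, HasDerivAt (fun u : ℝ => s⁻¹ * Real.arctan ((u + c) / s))
        (1 / ((u + c) ^ 2 + s ^ 2)) u := by
      intro u
      have h1 : HasDerivAt (fun u : ℝ => (u + c) / s) (1 / s) u := by
        simpa using ((hasDerivAt_id u).add_const c).div_const s
      have h2 := (Real.hasDerivAt_arctan ((u + c) / s)).comp u h1
      have h3 := h2.const_mul s⁻¹
      refine h3.congr_deriv ?_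
      have : (1 + ((u + c) / s) ^ 2) ≠ 0 := by positivity
      field_simp
      ring
    have htend : Tendsto (fun u : ℝ => s⁻¹ * Real.arctan ((u + c) / s)) atTop
        (nhds (s⁻¹ * (Real.pi / 2))) := by
      apply Tendsto.const_mul
      apply (tendsto_nhds_of_tendsto_nhdsWithin Real.tendsto_arctan_atTop).comp
      apply Tendsto.atTop_div_const hs
      exact tendsto_atTop_add_const_right _ c tendsto_id
    have hint : ∫ u in Set.Ioi (0:ℝ), 1 / ((u + c) ^ 2 + s ^ 2)
        = s⁻¹ * (Real.pi / 2) - s⁻¹ * Real.arctan ((0 + c) / s) := by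
      apply integral_Ioi_of_hasDerivAt_of_nonneg' (fun u _ => hF u)
        (fun u _ => by positivity) htend
    have harctan : Real.arctan (c / s) = Real.pi / 2 - θ := by
      have h1 : c / s = Real.tan (Real.pi / 2 - θ) := by
        rw [Real.tan_pi_div_two_sub, Real.tan_eq_sin_div_cos, inv_div]
      rw [h1, Real.arctan_tan] <;> linarith
    have : ∫ u in Set.Ioi (0:ℝ), g u
        = (s / (α * Real.pi)) * ∫ u in Set.Ioi (0:ℝ), 1 / ((u + c) ^ 2 + s ^ 2) := by
      rw [← MeasureTheory.integral_const_mul]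
      apply setIntegral_congr_fun measurableSet_Ioi
      intro u _
      simp only [hg]
      have := (hdenpos u).ne'
      field_simp
    rw [this, hint, zero_add, harctan]
    have : s⁻¹ * (Real.pi / 2) - s⁻¹ * (Real.pi / 2 - θ) = θ / s := by
      field_simp; ring
    rw [this]
    field_simp [hθdef]
    ring
end

section
/- Let α ∈ (0,2]. If X is standard normal and M_{α/2} is an independent Mittag-Leffler random variable with parameter α/2 (Laplace transform 1/(1+s^{α/2})), then X·√(2 M_{α/2}) has the Linnik distribution with parameter α, i.e., its characteristic function is 1/(1 + |t|^α) for t ∈ ℝ. -/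
open MeasureTheory ProbabilityTheory Real Set

lemma gauss_char_aux (u : ℝ) :
    ∫ x, Complex.exp (Complex.I * u * x) ∂(gaussianReal 0 1) =
      Complex.exp (-(u ^ 2) / 2) := by
  rw [gaussianReal_of_var_ne_zero 0 one_ne_zero]
  have hmeas : Measurable fun x => (gaussianPDFReal 0 1 x).toNNReal :=
    (measurable_gaussianPDFReal 0 1).real_toNNReal
  have hdens : gaussianPDF 0 1 = fun x => ((gaussianPDFReal 0 1 x).toNNReal : ENNReal) := by
    funext x; rfl
  rw [hdens, integral_withDensity_eq_integral_smul hmeas]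
  have hpdf : ∀ x : ℝ, gaussianPDFReal 0 1 x = (√(2 * π))⁻¹ * rexp (-x ^ 2 / 2) := by
    intro x; simp [gaussianPDFReal]
  have key : ∀ x : ℝ, (gaussianPDFReal 0 1 x).toNNReal • Complex.exp (Complex.I * u * x) =
      (((√(2 * π))⁻¹ : ℝ) : ℂ) *
        Complex.exp ((-1/2 : ℂ) * (x : ℂ) ^ 2 + (Complex.I * u) * x + 0) := by
    intro x
    rw [NNReal.smul_def, Real.coe_toNNReal _ (gaussianPDFReal_nonneg 0 1 x),
      Complex.real_smul, hpdf x]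
    push_cast
    rw [mul_assoc]
    congr 1
    rw [← Complex.exp_add]
    congr 1
    push_cast
    ring
  simp_rw [key]
  rw [integral_const_mul, integral_cexp_quadratic (by norm_num : ((-1:ℂ)/2).re < 0)]
  have h2pi : (0:ℝ) < 2 * π := by positivity
  have hsqrt : ((√(2 * π) : ℝ) : ℂ) = ((2 * π : ℝ) : ℂ) ^ (1/2 : ℂ) := by
    rw [Real.sqrt_eq_rpow, Complex.ofReal_cpow h2pi.le]
    norm_num
  have hbase : (↑π / -((-1:ℂ)/2)) = ((2 * π : ℝ) : ℂ) := by
    push_cast; field_simp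
  rw [hbase, Complex.ofReal_inv, hsqrt, ← mul_assoc, inv_mul_cancel₀, one_mul]
  · congr 1
    have : Complex.I ^ 2 = -1 := Complex.I_sq
    field_simp
    ring_nf
    rw [Complex.I_sq]
    ring
  · rw [Ne, Complex.cpow_eq_zero_iff]
    push_cast
    simp [Real.pi_ne_zero]

/-- For `α ∈ (0, 2]`: if `X` is standard normal and `M` is an independent Mittag-Leffler
random variable with parameter `α/2`, then `X · √(2M)` has the Linnik distribution with
parameter `α`, i.e. its characteristic function is `1/(1 + |t|^α)`. -/
theorem linnik_normal_mittag_leffler_mixture (α : ℝ) (hα0 : 0 < α) (hα2 : α ≤ 2)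
    {Ω : Type*} [MeasurableSpace Ω] (P : Measure Ω) [IsProbabilityMeasure P]
    (X M : Ω → ℝ) (hX : Measurable X) (hM : Measurable M)
    (hXnorm : Measure.map X P = ProbabilityTheory.gaussianReal 0 1)
    (hMpos : ∀ᵐ ω ∂P, 0 < M ω)
    (hMLaplace : ∀ s : ℝ, 0 ≤ s →
      ∫ ω, Real.exp (-(s * M ω)) ∂P = 1 / (1 + s ^ (α / 2)))
    (hindep : IndepFun X M P) :
    ∀ t : ℝ,
      ∫ ω, Complex.exp (Complex.I * t * (X ω * Real.sqrt (2 * M ω))) ∂P =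
        ((1 / (1 + |t| ^ α) : ℝ) : ℂ) := by
  intro t
  set g : ℝ × ℝ → ℂ := fun p => Complex.exp (Complex.I * t * (p.1 * Real.sqrt (2 * p.2))) with hg
  have hgmeas : Measurable g := by
    apply Complex.measurable_exp.comp
    exact measurable_const.mul
      ((Complex.measurable_ofReal.comp measurable_fst).mul
        (Complex.measurable_ofReal.comp ((measurable_const.mul measurable_snd).sqrt)))
  have hgnorm : ∀ p : ℝ × ℝ, ‖g p‖ = 1 := by
    intro p
    have : Complex.I * t * (p.1 * Real.sqrt (2 * p.2)) =
        ((t * (p.1 * Real.sqrt (2 * p.2)) : ℝ) : ℂ) * Complex.I := by push_cast; ring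
    rw [hg]
    simp only [this]
    exact Complex.norm_exp_ofReal_mul_I _
  have hpair : P.map (fun ω => (X ω, M ω)) = (P.map X).prod (P.map M) :=
    (indepFun_iff_map_prod_eq_prod_map_map hX.aemeasurable hM.aemeasurable).mp hindep
  have hXprob : IsProbabilityMeasure (P.map X) := Measure.isProbabilityMeasure_map hX.aemeasurable
  have hMprob : IsProbabilityMeasure (P.map M) := Measure.isProbabilityMeasure_map hM.aemeasurable
  have hint : Integrable g ((P.map X).prod (P.map M)) := by
    refine Integrable.mono' (integrable_const 1) hgmeas.aestronglyMeasurable ?_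
    filter_upwards with p
    rw [hgnorm p]
  have step1 : ∫ ω, Complex.exp (Complex.I * t * (X ω * Real.sqrt (2 * M ω))) ∂P
      = ∫ p, g p ∂((P.map X).prod (P.map M)) := by
    rw [← hpair, integral_map (hX.prodMk hM).aemeasurable hgmeas.aestronglyMeasurable]
  rw [step1, integral_prod_symm g hint]
  have hae : ∀ᵐ m ∂(P.map M), 0 < m := by
    refine (ae_map_iff hM.aemeasurable ?_).2 hMpos
    exact measurableSet_Ioi
  have inner : ∀ᵐ m ∂(P.map M),
      (∫ x, g (x, m) ∂(P.map X)) = ((rexp (-(t ^ 2 * m)) : ℝ) : ℂ) := by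
    filter_upwards [hae] with m hm
    have hs : Real.sqrt (2 * m) ^ 2 = 2 * m := Real.sq_sqrt (by positivity)
    have : ∀ x : ℝ, g (x, m) =
        Complex.exp (Complex.I * ((t * Real.sqrt (2 * m) : ℝ) : ℂ) * x) := by
      intro x; rw [hg]; push_cast; ring_nf
    simp_rw [this]
    rw [hXnorm, gauss_char_aux (t * Real.sqrt (2 * m))]
    have h1 : (t * Real.sqrt (2 * m)) ^ 2 = t ^ 2 * m * 2 := by
      rw [mul_pow, hs]; ring
    have h2 : -(((t * Real.sqrt (2 * m) : ℝ) : ℂ) ^ 2) / 2 = ((-(t ^ 2 * m) : ℝ) : ℂ) := by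
      rw [← Complex.ofReal_pow, h1]; push_cast; ring
    rw [h2]
    exact (Complex.ofReal_exp _).symm
  rw [integral_congr_ae inner]
  have : ∫ m, ((rexp (-(t ^ 2 * m)) : ℝ) : ℂ) ∂(P.map M)
      = ((∫ m, rexp (-(t ^ 2 * m)) ∂(P.map M) : ℝ) : ℂ) := by
    exact integral_ofReal
  rw [this]
  have hmapint : ∫ m, rexp (-(t ^ 2 * m)) ∂(P.map M) = ∫ ω, rexp (-(t ^ 2 * M ω)) ∂P := by
    rw [integral_map hM.aemeasurable]
    exact (measurable_exp.comp ((measurable_const.mul measurable_id).neg)).aestronglyMeasurable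
  rw [hmapint, hMLaplace (t ^ 2) (sq_nonneg t)]
  congr 2
  rw [← sq_abs t, ← Real.rpow_natCast |t| 2, ← Real.rpow_mul (abs_nonneg t)]
  norm_num
  rw [show 2 * (α / 2) = α by ring]
end

section
/- Let r ∈ (0,1], α ∈ (0,1], μ > 0, and let N_{r,α,μ} be a random variable with the generalized negative binomial distribution P(N_{r,α,μ} = k) = (1/k!)∫_0^∞ e^{−z} z^k g*(z; r, α, μ) dz. Then this distribution is mixed geometric: P(N_{r,α,μ} = k) = ∫_0^1 y(1−y)^k dP(Y_{r,α,μ} < y) for k = 0,1,2,..., where Y_{r,α,μ} = S·Z^{1/α} / (1 + S·Z^{1/α}), with S = S_{α,1} a one-sided strictly stable random variable and Z = Z_{r,μ} an independent random variable with Gleser density p(z; r, μ). -/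
open MeasureTheory ProbabilityTheory Real Set
open scoped ENNReal NNReal

lemma mul_exp_neg_le {c x : ℝ} (hc : 0 < c) (hx : 0 ≤ x) :
    x * Real.exp (-(c * x)) ≤ 1 / c := by
  rcases eq_or_lt_of_le hx with h | h
  · simp [← h]; positivity
  · have h1 : c * x ≤ Real.exp (c * x) := by linarith [Real.add_one_le_exp (c * x)]
    rw [Real.exp_neg]
    calc x * (Real.exp (c * x))⁻¹ ≤ x * (c * x)⁻¹ := by
          exact mul_le_mul_of_nonneg_left (inv_anti₀ (by positivity) h1) hx
      _ = 1 / c := by field_simp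

lemma integrableOn_rpow_exp {p b : ℝ} (hp : 0 < p) (hb : 0 < b) :
    IntegrableOn (fun t : ℝ => t ^ (p - 1) * Real.exp (-(b * t))) (Set.Ioi 0) := by
  have h0 := Real.GammaIntegral_convergent hp
  have h1 : IntegrableOn (fun x : ℝ => Real.exp (-(b * x)) * (b * x) ^ (p - 1)) (Ioi 0) := by
    have := (integrableOn_Ioi_comp_mul_left_iff
        (fun x : ℝ => Real.exp (-x) * x ^ (p - 1)) 0 hb).mpr (by simpa using h0)
    simpa using this
  have h2 : IntegrableOn (fun x : ℝ => b ^ (1-p) * (Real.exp (-(b * x)) * (b * x) ^ (p - 1))) (Ioi 0) := h1.const_mul (b ^ (1 - p))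
  apply h2.congr_fun ?_ measurableSet_Ioi
  intro x hx
  have hx0 : (0:ℝ) < x := hx
  show b ^ (1-p) * (Real.exp (-(b * x)) * (b * x) ^ (p - 1)) = x ^ (p - 1) * Real.exp (-(b * x))
  rw [Real.mul_rpow hb.le hx0.le, show b ^ (1-p) * (Real.exp (-(b*x)) * (b ^ (p-1) * x ^ (p-1)))
      = (b ^ (1-p) * b ^ (p-1)) * (x ^ (p-1) * Real.exp (-(b*x))) from by ring,
    ← Real.rpow_add hb, show (1-p) + (p-1) = 0 from by ring, Real.rpow_zero, one_mul]

lemma integrableOn_pow_exp (k : ℕ) {b : ℝ} (hb : 0 < b) :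
    IntegrableOn (fun t : ℝ => t ^ k * Real.exp (-(b * t))) (Set.Ioi 0) := by
  have := integrableOn_rpow_exp (p := (k : ℝ) + 1) (by positivity) hb
  apply this.congr_fun ?_ measurableSet_Ioi
  intro x hx
  simp [show ((k:ℝ) + 1) - 1 = (k : ℝ) from by ring, Real.rpow_natCast]

lemma integral_pow_exp (k : ℕ) {b : ℝ} (hb : 0 < b) :
    ∫ t in Set.Ioi (0:ℝ), t ^ k * Real.exp (-(b * t)) = k.factorial / b ^ (k + 1) := by
  have h := Real.integral_rpow_mul_exp_neg_mul_Ioi (a := (k : ℝ) + 1) (by positivity) hb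
  rw [show ((k:ℝ) + 1) - 1 = (k : ℝ) from by ring] at h
  simp_rw [Real.rpow_natCast] at h
  rw [h, Real.Gamma_nat_eq_factorial,
    show ((k:ℝ) + 1) = ((k + 1 : ℕ) : ℝ) from by push_cast; ring,
    Real.rpow_natCast, div_pow, one_pow]
  ring

lemma laplace_deriv {Ω : Type*} [MeasurableSpace Ω] (P : Measure Ω) [IsProbabilityMeasure P]
    (S : Ω → ℝ) (hS : Measurable S) (hSpos : ∀ᵐ ω ∂P, 0 < S ω) (α : ℝ) (hα0 : 0 < α)
    (hL : ∀ s : ℝ, 0 ≤ s → ∫ ω, Real.exp (-(s * S ω)) ∂P = Real.exp (-(s ^ α)))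
    {a : ℝ} (ha : 0 < a) :
    Integrable (fun ω => S ω * Real.exp (-(a * S ω))) P ∧
      ∫ ω, S ω * Real.exp (-(a * S ω)) ∂P = α * a ^ (α - 1) * Real.exp (-(a ^ α)) := by
  set F : ℝ → Ω → ℝ := fun t ω => Real.exp (-(t * S ω)) with hF
  set F' : ℝ → Ω → ℝ := fun t ω => -(S ω * Real.exp (-(t * S ω))) with hF'
  have hmeas : ∀ t : ℝ, AEStronglyMeasurable (F t) P :=
    fun t => ((hS.const_mul t).neg.exp).aestronglyMeasurable
  have hint : Integrable (F a) P := by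
    apply Integrable.mono' (integrable_const 1) (hmeas a)
    filter_upwards [hSpos] with ω hω
    rw [Real.norm_eq_abs, abs_of_pos (Real.exp_pos _)]
    apply Real.exp_le_one_iff.mpr
    nlinarith
  have hmeas' : AEStronglyMeasurable (F' a) P :=
    ((hS.mul ((hS.const_mul a).neg.exp)).neg).aestronglyMeasurable
  have hbound : ∀ᵐ ω ∂P, ∀ t ∈ Metric.ball a (a / 2), ‖F' t ω‖ ≤ 2 / a := by
    filter_upwards [hSpos] with ω hω t ht
    have h2 : a / 2 ≤ t := by
      rw [Metric.mem_ball, Real.dist_eq] at ht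
      have := abs_lt.mp ht
      linarith [this.1]
    rw [norm_neg, Real.norm_eq_abs, abs_of_nonneg (by positivity)]
    calc S ω * Real.exp (-(t * S ω)) ≤ S ω * Real.exp (-(a / 2 * S ω)) := by
          apply mul_le_mul_of_nonneg_left _ hω.le
          apply Real.exp_le_exp.mpr
          nlinarith
      _ ≤ 1 / (a / 2) := mul_exp_neg_le (by positivity) hω.le
      _ = 2 / a := by rw [one_div_div]
  have hdiff : ∀ᵐ ω ∂P, ∀ t ∈ Metric.ball a (a / 2), HasDerivAt (fun u => F u ω) (F' t ω) t := by
    filter_upwards with ω t _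
    have h1 : HasDerivAt (fun u : ℝ => -(u * S ω)) (-(S ω)) t := by
      have := ((hasDerivAt_id t).mul_const (S ω)).neg
      simp only [one_mul] at this
      exact this
    have h2 := h1.exp
    convert h2 using 1
    simp [F', mul_comm]
  have key := hasDerivAt_integral_of_dominated_loc_of_deriv_le
    (Metric.ball_mem_nhds a (show (0:ℝ) < a / 2 by positivity)) (Filter.Eventually.of_forall hmeas) hint hmeas'
    hbound (integrable_const _) hdiff
  have hInt : Integrable (fun ω => S ω * Real.exp (-(a * S ω))) P := by
    have h := key.1
    simp only [hF'] at h
    have h2 := h.neg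
    exact h2.congr (Filter.Eventually.of_forall fun ω => by simp)
  refine ⟨hInt, ?_⟩
  have heq : (fun t => ∫ ω, F t ω ∂P) =ᶠ[nhds a] fun t => Real.exp (-(t ^ α)) := by
    filter_upwards [Ioi_mem_nhds ha] with t ht
    exact hL t (le_of_lt ht)
  have hD1 : HasDerivAt (fun t => Real.exp (-(t ^ α))) (∫ ω, F' a ω ∂P) a :=
    key.2.congr_of_eventuallyEq heq.symm
  have hD2 : HasDerivAt (fun t : ℝ => Real.exp (-(t ^ α)))
      (Real.exp (-(a ^ α)) * -(α * a ^ (α - 1))) a := by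
    have h1 : HasDerivAt (fun t : ℝ => t ^ α) (α * a ^ (α - 1)) a :=
      Real.hasDerivAt_rpow_const (Or.inl ha.ne')
    exact h1.neg.exp
  have huniq := hD1.unique hD2
  have h3 : ∫ ω, F' a ω ∂P = -∫ ω, S ω * Real.exp (-(a * S ω)) ∂P := by
    rw [← integral_neg]
  rw [h3] at huniq
  have := neg_eq_iff_eq_neg.mp huniq
  rw [this]
  ring



/-- For `r, α ∈ (0,1]` and `μ > 0`, the generalized negative binomial distribution
(mixed Poisson with generalized gamma mixing) is mixed geometric with mixing random
variable `Y = S Z^{1/α} / (1 + S Z^{1/α})`, where `S` is one-sided strictly stable with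
Laplace transform `exp (-s^α)` and `Z` is independent with the Gleser density
`p(z; r, μ)`. -/
theorem gnb_is_mixed_geometric (r α μ : ℝ)
    (hr0 : 0 < r) (hr1 : r ≤ 1) (hα0 : 0 < α) (hα1 : α ≤ 1) (hμ : 0 < μ)
    {Ω : Type*} [MeasurableSpace Ω] (P : Measure Ω) [IsProbabilityMeasure P]
    (S Z : Ω → ℝ) (hS : Measurable S) (hZ : Measurable Z)
    (hSpos : ∀ᵐ ω ∂P, 0 < S ω)
    (hSLaplace : ∀ s : ℝ, 0 ≤ s →
      ∫ ω, Real.exp (-(s * S ω)) ∂P = Real.exp (-(s ^ α)))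
    (hZdens : Measure.map Z P = volume.withDensity fun z =>
      ENNReal.ofReal
        (μ ^ r / (Real.Gamma (1 - r) * Real.Gamma r) *
          (if μ ≤ z then 1 / ((z - μ) ^ r * z) else 0)))
    (hindep : IndepFun S Z P) :
    ∀ k : ℕ,
      (1 / k.factorial : ℝ) *
          ∫ z in Set.Ioi (0 : ℝ),
            Real.exp (-z) * z ^ k *
              (α * μ ^ r * z ^ (α * r - 1) * Real.exp (-(μ * z ^ α)) / Real.Gamma r) =
        ∫ ω,
          (S ω * Z ω ^ (1 / α) / (1 + S ω * Z ω ^ (1 / α))) *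
            (1 - S ω * Z ω ^ (1 / α) / (1 + S ω * Z ω ^ (1 / α))) ^ k ∂P := by
  intro k
  -- rule out r = 1
  rcases lt_or_eq_of_le hr1 with hrlt | hre
  swap
  · exfalso
    have h0 : Measure.map Z P Set.univ = 1 := by
      rw [Measure.map_apply hZ MeasurableSet.univ]
      simp
    rw [hZdens] at h0
    have hzero : (fun z : ℝ => ENNReal.ofReal (μ ^ r / (Real.Gamma (1 - r) * Real.Gamma r) *
        (if μ ≤ z then 1 / ((z - μ) ^ r * z) else 0))) = fun _ => 0 := by
      subst hre
      funext z
      simp [Real.Gamma_zero]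
    have hz00 : (fun _ : ℝ => (0:ℝ≥0∞)) = 0 := rfl
    rw [hzero, hz00, withDensity_zero] at h0
    simp at h0
  -- basic positivity facts
  have hα : α ≠ 0 := hα0.ne'
  have hGr : 0 < Real.Gamma r := Real.Gamma_pos_of_pos hr0
  have hG1r : 0 < Real.Gamma (1 - r) := Real.Gamma_pos_of_pos (by linarith)
  set C : ℝ := μ ^ r / (Real.Gamma (1 - r) * Real.Gamma r) with hCdef
  have hC : 0 ≤ C := div_nonneg (Real.rpow_nonneg hμ.le r) (by positivity)
  have hdensmeas : Measurable (fun z : ℝ =>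
      ENNReal.ofReal (C * (if μ ≤ z then 1 / ((z - μ) ^ r * z) else 0))) := by
    apply Measurable.ennreal_ofReal
    apply Measurable.const_mul
    exact Measurable.ite measurableSet_Ici
      (measurable_const.div (((measurable_id.sub_const μ).pow_const r).mul measurable_id))
      measurable_const
  -- Z is a.s. ≥ μ
  have hmap0 : Measure.map Z P (Set.Iio μ) = 0 := by
    rw [hZdens, withDensity_apply _ measurableSet_Iio]
    have h0 : ∀ᵐ z : ℝ ∂volume, z ∈ Set.Iio μ →
        ENNReal.ofReal (C * (if μ ≤ z then 1 / ((z - μ) ^ r * z) else 0)) = 0 := by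
      refine ae_of_all _ fun z hz => ?_
      rw [if_neg (not_le.mpr hz)]
      simp
    rw [setLIntegral_congr_fun_ae measurableSet_Iio h0, lintegral_zero]
  have hZae : ∀ᵐ ω ∂P, μ ≤ Z ω := by
    rw [ae_iff]
    have hset : {ω | ¬ μ ≤ Z ω} = Z ⁻¹' Set.Iio μ := by ext ω; simp [not_le]
    rw [hset, ← Measure.map_apply hZ measurableSet_Iio, hmap0]
  have hZaemap : ∀ᵐ z ∂(Measure.map Z P), μ ≤ z := by
    rw [ae_iff]
    have hset : {z : ℝ | ¬ μ ≤ z} = Set.Iio μ := by ext z; simp [not_le]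
    rw [hset, hmap0]
  -- Gleser moment computation
  have lemmaD : ∀ u : ℝ, 0 < u →
      ∫⁻ z, ENNReal.ofReal (z * Real.exp (-(u * z))) ∂(Measure.map Z P)
        = ENNReal.ofReal (μ ^ r * Real.exp (-(u * μ)) * u ^ (r - 1) / Real.Gamma r) := by
    intro u hu
    rw [hZdens, lintegral_withDensity_eq_lintegral_mul _ hdensmeas
      (show Measurable fun z : ℝ => ENNReal.ofReal (z * Real.exp (-(u * z))) from
        (measurable_id'.mul ((measurable_id'.const_mul u).neg.exp)).ennreal_ofReal)]
    have hae : ∀ᵐ z : ℝ ∂volume, z ≠ μ := by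
      rw [ae_iff]
      have hset : {z : ℝ | ¬ z ≠ μ} = {μ} := by ext z; simp
      rw [hset]
      exact measure_singleton μ
    have hcongr : (fun z => ENNReal.ofReal
          (C * (if μ ≤ z then 1 / ((z - μ) ^ r * z) else 0))
          * ENNReal.ofReal (z * Real.exp (-(u * z))))
        =ᵐ[volume] (Set.Ioi μ).indicator fun z =>
          ENNReal.ofReal (C * Real.exp (-(u * z)) * ((z - μ) ^ r)⁻¹) := by
      filter_upwards [hae] with z hz
      rcases lt_trichotomy z μ with h | h | h
      · rw [Set.indicator_of_notMem (by simpa using h.le)]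
        simp [if_neg (not_le.mpr h)]
      · exact absurd h hz
      · rw [Set.indicator_of_mem (show z ∈ Set.Ioi μ from h)]
        simp only [if_pos h.le]
        rw [← ENNReal.ofReal_mul (by
          have h1 : (0:ℝ) < (z - μ) ^ r := Real.rpow_pos_of_pos (by linarith) r
          have hz0 : (0:ℝ) < z := lt_trans hμ h
          positivity)]
        congr 1
        have h1 : (0:ℝ) < (z - μ) ^ r := Real.rpow_pos_of_pos (by linarith) r
        have hz0 : (0:ℝ) < z := lt_trans hμ h
        field_simp
    simp only [Pi.mul_apply]
    rw [lintegral_congr_ae hcongr, lintegral_indicator measurableSet_Ioi]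
    have hgm : Measurable fun z : ℝ =>
        ENNReal.ofReal (C * Real.exp (-(u * z)) * ((z - μ) ^ r)⁻¹) :=
      ((measurable_const.mul ((measurable_id.const_mul u).neg.exp)).mul
        ((measurable_id.sub_const μ).pow_const r).inv).ennreal_ofReal
    have htrans : ∫⁻ z in Set.Ioi μ,
        ENNReal.ofReal (C * Real.exp (-(u * z)) * ((z - μ) ^ r)⁻¹) ∂volume
        = ∫⁻ t in Set.Ioi 0,
        ENNReal.ofReal (C * Real.exp (-(u * (t + μ))) * ((t + μ - μ) ^ r)⁻¹) ∂volume := by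
      conv_lhs => rw [show (volume : Measure ℝ) = Measure.map (fun t : ℝ => t + μ) volume from
        (map_add_right_eq_self volume μ).symm]
      rw [setLIntegral_map measurableSet_Ioi hgm (measurable_add_const μ)]
      rw [show ((fun t : ℝ => t + μ) ⁻¹' Set.Ioi μ) = Set.Ioi 0 from by ext t; simp]
    rw [htrans]
    have hcongr2 : ∀ᵐ t : ℝ ∂volume, t ∈ Set.Ioi (0:ℝ) →
        ENNReal.ofReal (C * Real.exp (-(u * (t + μ))) * ((t + μ - μ) ^ r)⁻¹)
          = ENNReal.ofReal ((C * Real.exp (-(u * μ))) * (t ^ ((1 - r) - 1) * Real.exp (-(u * t)))) := by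
      refine ae_of_all _ fun t ht => ?_
      have ht0 : (0:ℝ) < t := ht
      congr 1
      rw [add_sub_cancel_right, show -(u * (t + μ)) = -(u * t) + -(u * μ) from by ring,
        Real.exp_add, show (1:ℝ) - r - 1 = -r from by ring, Real.rpow_neg ht0.le]
      ring
    rw [setLIntegral_congr_fun_ae measurableSet_Ioi hcongr2]
    have hnn : 0 ≤ᵐ[volume.restrict (Set.Ioi (0:ℝ))]
        fun t => (C * Real.exp (-(u * μ))) * (t ^ ((1 - r) - 1) * Real.exp (-(u * t))) := by
      rw [Filter.EventuallyLE, ae_restrict_iff' measurableSet_Ioi]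
      refine ae_of_all _ fun t ht => ?_
      have ht0 : (0:ℝ) < t := ht
      have h2 : (0:ℝ) ≤ t ^ ((1 - r) - 1) := Real.rpow_nonneg ht0.le _
      have h3 := Real.exp_pos (-(u * μ))
      have h4 := Real.exp_pos (-(u * t))
      positivity
    rw [← ofReal_integral_eq_lintegral_ofReal
      ((integrableOn_rpow_exp (by linarith : (0:ℝ) < 1 - r) hu).const_mul _) hnn]
    rw [integral_const_mul, Real.integral_rpow_mul_exp_neg_mul_Ioi (by linarith) hu]
    congr 1
    have hpow : (1/u) ^ ((1:ℝ)-r) = u ^ (r-1) := by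
      rw [one_div, Real.inv_rpow hu.le, ← Real.rpow_neg hu.le]
      congr 1
      ring
    rw [hpow, hCdef]
    field_simp
  set gstar : ℝ → ℝ := fun w => α * μ ^ r * w ^ (α * r - 1) * Real.exp (-(μ * w ^ α)) / Real.Gamma r with hgstar
  -- Laplace transform derivative in lintegral form
  have lemmaC : ∀ a : ℝ, 0 < a →
      ∫⁻ ω, ENNReal.ofReal (S ω * Real.exp (-(a * S ω))) ∂P
        = ENNReal.ofReal (α * a ^ (α - 1) * Real.exp (-(a ^ α))) := by
    intro a ha
    obtain ⟨hint, hval⟩ := laplace_deriv P S hS hSpos α hα0 hSLaplace ha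
    have hnn : 0 ≤ᵐ[P] fun ω => S ω * Real.exp (-(a * S ω)) := by
      filter_upwards [hSpos] with ω hω
      exact mul_nonneg hω.le (Real.exp_pos _).le
    rw [← ofReal_integral_eq_lintegral_ofReal hint hnn, hval]
  have hZr : Measurable fun ω => Z ω ^ (1 / α) := hZ.pow_const _
  have hT : Measurable fun ω => S ω * Z ω ^ (1 / α) := hS.mul hZr
  have hTpos : ∀ᵐ ω ∂P, 0 < S ω * Z ω ^ (1 / α) := by
    filter_upwards [hSpos, hZae] with ω h1 h2
    exact mul_pos h1 (Real.rpow_pos_of_pos (lt_of_lt_of_le hμ h2) _)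
  -- E[T e^{-wT}] = gstar w
  have lemma4 : ∀ w : ℝ, 0 < w →
      ∫⁻ ω, ENNReal.ofReal ((S ω * Z ω ^ (1 / α)) * Real.exp (-(w * (S ω * Z ω ^ (1 / α))))) ∂P
        = ENNReal.ofReal (gstar w) := by
    intro w hw
    have hpair : Measure.map (fun ω => (S ω, Z ω)) P
        = (Measure.map S P).prod (Measure.map Z P) :=
      (indepFun_iff_map_prod_eq_prod_map_map hS.aemeasurable hZ.aemeasurable).mp hindep
    have hg : Measurable (fun p : ℝ × ℝ =>
        ENNReal.ofReal ((p.1 * p.2 ^ (1 / α)) * Real.exp (-(w * (p.1 * p.2 ^ (1 / α)))))) := by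
      have h1 : Measurable fun p : ℝ × ℝ => p.1 * p.2 ^ (1 / α) :=
        measurable_fst.mul (measurable_snd.pow_const _)
      exact (h1.mul ((h1.const_mul w).neg.exp)).ennreal_ofReal
    have e1 : ∫⁻ ω, ENNReal.ofReal ((S ω * Z ω ^ (1 / α)) *
          Real.exp (-(w * (S ω * Z ω ^ (1 / α))))) ∂P
        = ∫⁻ p : ℝ × ℝ, ENNReal.ofReal ((p.1 * p.2 ^ (1 / α)) *
            Real.exp (-(w * (p.1 * p.2 ^ (1 / α)))))
            ∂((Measure.map S P).prod (Measure.map Z P)) := by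
      rw [← hpair, lintegral_map hg (hS.prodMk hZ)]
    rw [e1, lintegral_prod_symm _ hg.aemeasurable]
    have e2 : ∫⁻ z, ∫⁻ s, ENNReal.ofReal ((s * z ^ (1 / α)) *
          Real.exp (-(w * (s * z ^ (1 / α))))) ∂(Measure.map S P) ∂(Measure.map Z P)
        = ∫⁻ z, ENNReal.ofReal (α * w ^ (α - 1))
            * ENNReal.ofReal (z * Real.exp (-(w ^ α * z))) ∂(Measure.map Z P) := by
      apply lintegral_congr_ae
      filter_upwards [hZaemap] with z hz
      have hz0 : (0:ℝ) < z := lt_of_lt_of_le hμ hz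
      have hzr : (0:ℝ) < z ^ (1 / α) := Real.rpow_pos_of_pos hz0 _
      have ha : 0 < w * z ^ (1 / α) := mul_pos hw hzr
      have hptw : ∀ s : ℝ, (s * z ^ (1 / α)) * Real.exp (-(w * (s * z ^ (1 / α))))
          = z ^ (1 / α) * (s * Real.exp (-((w * z ^ (1 / α)) * s))) := by
        intro s
        rw [show -(w * (s * z ^ (1 / α))) = -((w * z ^ (1 / α)) * s) from by ring]
        ring
      simp_rw [hptw, ENNReal.ofReal_mul hzr.le]
      rw [lintegral_const_mul' _ _ ENNReal.ofReal_ne_top,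
        lintegral_map (show Measurable fun a : ℝ => ENNReal.ofReal (a * Real.exp (-(w * z ^ (1 / α) * a))) from
          (measurable_id'.mul ((measurable_id'.const_mul _).neg.exp)).ennreal_ofReal) hS,
        lemmaC _ ha, ← ENNReal.ofReal_mul hzr.le,
        ← ENNReal.ofReal_mul (mul_nonneg hα0.le (Real.rpow_nonneg hw.le _))]
      congr 1
      have hA : (w * z ^ (1 / α)) ^ α = w ^ α * z := by
        rw [Real.mul_rpow hw.le hzr.le, ← Real.rpow_mul hz0.le,
          one_div_mul_cancel hα, Real.rpow_one]
      have hB : (w * z ^ (1 / α)) ^ (α - 1)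
          = w ^ (α - 1) * z ^ (1 / α * (α - 1)) := by
        rw [Real.mul_rpow hw.le hzr.le, ← Real.rpow_mul hz0.le]
      have hC2 : z ^ (1 / α) * z ^ (1 / α * (α - 1)) = z := by
        rw [← Real.rpow_add hz0, show 1 / α + 1 / α * (α - 1) = 1 from by field_simp; ring,
          Real.rpow_one]
      rw [hB, hA, show z ^ (1 / α) * (α * (w ^ (α - 1) * z ^ (1 / α * (α - 1)))
            * Real.exp (-(w ^ α * z)))
          = α * w ^ (α - 1) * ((z ^ (1 / α) * z ^ (1 / α * (α - 1)))
            * Real.exp (-(w ^ α * z))) from by ring, hC2]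
    rw [e2, lintegral_const_mul' _ _ ENNReal.ofReal_ne_top,
      lemmaD _ (Real.rpow_pos_of_pos hw α),
      ← ENNReal.ofReal_mul (mul_nonneg hα0.le (Real.rpow_nonneg hw.le _))]
    congr 1
    have hD1 : (w ^ α) ^ (r - 1) = w ^ (α * (r - 1)) := (Real.rpow_mul hw.le _ _).symm
    have hD2 : w ^ (α - 1) * w ^ (α * (r - 1)) = w ^ (α * r - 1) := by
      rw [← Real.rpow_add hw]
      congr 1
      ring
    rw [hD1, hgstar]
    rw [show α * w ^ (α - 1) * (μ ^ r * Real.exp (-(w ^ α * μ)) * w ^ (α * (r - 1))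
          / Real.Gamma r)
        = α * μ ^ r * (w ^ (α - 1) * w ^ (α * (r - 1))) * Real.exp (-(w ^ α * μ))
          / Real.Gamma r from by ring, hD2, show -(w ^ α * μ) = -(μ * w ^ α) from by ring]
  -- main lintegral chain
  have hmainL : ∫⁻ ω, ENNReal.ofReal ((S ω * Z ω ^ (1 / α))
        / (1 + S ω * Z ω ^ (1 / α)) ^ (k + 1)) ∂P
      = ∫⁻ w in Set.Ioi (0:ℝ), ENNReal.ofReal (1 / (k.factorial:ℝ)
          * (w ^ k * Real.exp (-w)) * gstar w) ∂volume := by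
    have step1 : ∀ᵐ ω ∂P, ENNReal.ofReal ((S ω * Z ω ^ (1 / α))
          / (1 + S ω * Z ω ^ (1 / α)) ^ (k + 1))
        = ∫⁻ w in Set.Ioi (0:ℝ), ENNReal.ofReal (1 / (k.factorial:ℝ)
            * (w ^ k * Real.exp (-((1 + S ω * Z ω ^ (1 / α)) * w)))
            * (S ω * Z ω ^ (1 / α))) ∂volume := by
      filter_upwards [hTpos] with ω hω
      set t := S ω * Z ω ^ (1 / α) with hto
      have hb : (0:ℝ) < 1 + t := by linarith
      have hInt : IntegrableOn (fun w : ℝ => 1 / (k.factorial:ℝ)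
          * (w ^ k * Real.exp (-((1 + t) * w))) * t) (Set.Ioi 0) :=
        ((integrableOn_pow_exp k hb).const_mul _).mul_const _
      have hnn : 0 ≤ᵐ[volume.restrict (Set.Ioi (0:ℝ))] fun w : ℝ =>
          1 / (k.factorial:ℝ) * (w ^ k * Real.exp (-((1 + t) * w))) * t := by
        rw [Filter.EventuallyLE, ae_restrict_iff' measurableSet_Ioi]
        refine ae_of_all _ fun w hw => ?_
        have hw0 : (0:ℝ) < w := hw
        have h2 := Real.exp_pos (-((1 + t) * w))
        have h3 := hω.le
        have h4 : (0:ℝ) ≤ w ^ k := by positivity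
        have h5 : (0:ℝ) ≤ 1 / (k.factorial:ℝ) := by positivity
        exact mul_nonneg (mul_nonneg h5 (mul_nonneg h4 h2.le)) h3
      rw [← ofReal_integral_eq_lintegral_ofReal hInt hnn]
      congr 1
      rw [integral_mul_const, integral_const_mul, integral_pow_exp k hb]
      have hk : ((k.factorial:ℝ)) ≠ 0 := by positivity
      have hbk : ((1 + t) ^ (k + 1)) ≠ 0 := by positivity
      field_simp
    have hmeasprod : AEMeasurable (fun p : Ω × ℝ => ENNReal.ofReal
        (1 / (k.factorial:ℝ) * (p.2 ^ k
          * Real.exp (-((1 + S p.1 * Z p.1 ^ (1 / α)) * p.2)))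
          * (S p.1 * Z p.1 ^ (1 / α))))
        (P.prod (volume.restrict (Set.Ioi (0:ℝ)))) := by
      apply Measurable.aemeasurable
      have hTp : Measurable fun p : Ω × ℝ => S p.1 * Z p.1 ^ (1 / α) := hT.comp measurable_fst
      exact ((measurable_const.mul ((measurable_snd.pow_const k).mul
        (((measurable_const.add hTp).mul measurable_snd).neg.exp))).mul hTp).ennreal_ofReal
    rw [lintegral_congr_ae step1, lintegral_lintegral_swap hmeasprod]
    apply lintegral_congr_ae
    refine (ae_restrict_iff' measurableSet_Ioi).mpr (ae_of_all _ fun w hw => ?_)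
    have hw0 : (0:ℝ) < w := hw
    have hptw : ∀ t : ℝ, 1 / (k.factorial:ℝ) * (w ^ k * Real.exp (-((1 + t) * w))) * t
        = (1 / (k.factorial:ℝ) * (w ^ k * Real.exp (-w))) * (t * Real.exp (-(w * t))) := by
      intro t
      rw [show -((1 + t) * w) = -w + -(w * t) from by ring, Real.exp_add]
      ring
    simp_rw [hptw]
    have hc1 : (0:ℝ) ≤ 1 / (k.factorial:ℝ) * (w ^ k * Real.exp (-w)) := by positivity
    simp_rw [ENNReal.ofReal_mul hc1]
    rw [lintegral_const_mul' _ _ ENNReal.ofReal_ne_top, lemma4 w hw0,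
      ← ENNReal.ofReal_mul hc1]
  -- assemble
  have hRHS : ∫ ω, (S ω * Z ω ^ (1 / α) / (1 + S ω * Z ω ^ (1 / α)))
        * (1 - S ω * Z ω ^ (1 / α) / (1 + S ω * Z ω ^ (1 / α))) ^ k ∂P
      = ENNReal.toReal (∫⁻ ω, ENNReal.ofReal ((S ω * Z ω ^ (1 / α))
          / (1 + S ω * Z ω ^ (1 / α)) ^ (k + 1)) ∂P) := by
    rw [integral_congr_ae (g := fun ω => (S ω * Z ω ^ (1 / α))
        / (1 + S ω * Z ω ^ (1 / α)) ^ (k + 1)) ?_]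
    · apply integral_eq_lintegral_of_nonneg_ae
      · filter_upwards [hTpos] with ω hω
        have hb : (0:ℝ) < 1 + S ω * Z ω ^ (1 / α) := by linarith
        exact div_nonneg hω.le (by positivity)
      · exact (hT.div ((measurable_const.add hT).pow_const _)).aestronglyMeasurable
    · filter_upwards [hTpos] with ω hω
      set t := S ω * Z ω ^ (1 / α) with hto
      have hb : (0:ℝ) < 1 + t := by linarith
      have h1 : 1 - t / (1 + t) = 1 / (1 + t) := by field_simp; ring
      rw [h1, div_pow, one_pow, div_mul_div_comm, mul_one, ← pow_succ']
  have hLHS : ∫ z in Set.Ioi (0:ℝ), Real.exp (-z) * z ^ k * gstar z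
      = ENNReal.toReal (∫⁻ z in Set.Ioi (0:ℝ),
          ENNReal.ofReal (Real.exp (-z) * z ^ k * gstar z)) := by
    apply integral_eq_lintegral_of_nonneg_ae
    · rw [Filter.EventuallyLE, ae_restrict_iff' measurableSet_Ioi]
      refine ae_of_all _ fun z hz => ?_
      have hz0 : (0:ℝ) < z := hz
      rw [hgstar]
      have h1 : (0:ℝ) ≤ z ^ (α * r - 1) := Real.rpow_nonneg hz0.le _
      have h2 : (0:ℝ) ≤ μ ^ r := Real.rpow_nonneg hμ.le _
      have h3 := Real.exp_pos (-z)
      have h4 := Real.exp_pos (-(μ * z ^ α))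
      have h5 : (0:ℝ) ≤ z ^ k := by positivity
      simp only []
      apply mul_nonneg (mul_nonneg h3.le h5)
      apply div_nonneg _ hGr.le
      nlinarith [mul_nonneg (mul_nonneg (mul_nonneg hα0.le h2) h1) h4.le]
    · apply Measurable.aestronglyMeasurable
      rw [hgstar]
      exact (measurable_id'.neg.exp.mul (measurable_id'.pow_const k)).mul
        ((((measurable_id'.pow_const (α * r - 1)).const_mul (α * μ ^ r)).mul
          (((measurable_id'.pow_const α).const_mul μ).neg.exp)).div_const _)
  rw [hLHS, hRHS, hmainL]
  have hfin : ∫⁻ w in Set.Ioi (0:ℝ), ENNReal.ofReal (1 / (k.factorial:ℝ)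
        * (w ^ k * Real.exp (-w)) * gstar w) ∂volume
      = ENNReal.ofReal (1 / (k.factorial:ℝ))
        * ∫⁻ z in Set.Ioi (0:ℝ), ENNReal.ofReal (Real.exp (-z) * z ^ k * gstar z) := by
    rw [← lintegral_const_mul' _ _ ENNReal.ofReal_ne_top]
    apply lintegral_congr_ae
    refine (ae_restrict_iff' measurableSet_Ioi).mpr (ae_of_all _ fun w hw => ?_)
    show ENNReal.ofReal (1 / (k.factorial:ℝ) * (w ^ k * Real.exp (-w)) * gstar w)
        = ENNReal.ofReal (1 / (k.factorial:ℝ)) * ENNReal.ofReal (Real.exp (-w) * w ^ k * gstar w)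
    rw [← ENNReal.ofReal_mul (by positivity : (0:ℝ) ≤ 1 / (k.factorial:ℝ))]
    congr 1
    ring
  rw [hfin, ENNReal.toReal_mul, ENNReal.toReal_ofReal (by positivity)]
end
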